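/- arXiv:1801.01561 — 5 statements merged into one kernel-verified Lean document; each statement's English description precedes it below -/
import Mathlib

section
/- Let M be a von Neumann algebra on a complex Hilbert space H. The following conditions are equivalent: (a) M is commutative; (b) there exists an antiunitary operator J on H such that J A J⁻¹ = A* for every A ∈ M; (c) there exists an antiunitary operator J on H such that J A = A J for every selfadjoint A ∈ M; (d) there exists an antiunitary operator J on H such that J A = A J for every positive invertible A ∈ M. -/
open scoped ComplexOrder
open ContinuousLinearMap

noncomputable section

variable {H : Type*} [NormedAddCommGroup H] [InnerProductSpace ℂ H] [CompleteSpace H]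

local notation "⟪" x ", " y "⟫" => @inner ℂ _ _ x y

/-- Properties of the graph of a partial conjugation compatible with `M`. -/
structure IsConjGraph (M : VonNeumannAlgebra H) (Γ : Set (H × H)) : Prop where
  zero_mem : ((0 : H), (0 : H)) ∈ Γ
  add_mem : ∀ p ∈ Γ, ∀ q ∈ Γ, p + q ∈ Γ
  smul_mem : ∀ p ∈ Γ, ∀ c : ℂ, ((c • p.1 : H), ((starRingEnd ℂ c) • p.2 : H)) ∈ Γ
  symm_mem : ∀ p ∈ Γ, ((p.2 : H), (p.1 : H)) ∈ Γ
  inner_rel : ∀ p ∈ Γ, ∀ q ∈ Γ, ⟪p.2, q.2⟫ = starRingEnd ℂ ⟪p.1, q.1⟫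
  apply_mem : ∀ p ∈ Γ, ∀ A : H →L[ℂ] H, A ∈ M →
    ((A p.1 : H), (ContinuousLinearMap.adjoint A p.2 : H)) ∈ Γ

namespace IsConjGraph

variable {M : VonNeumannAlgebra H} {Γ : Set (H × H)}

theorem norm_eq (h : IsConjGraph M Γ) {p : H × H} (hp : p ∈ Γ) : ‖p.2‖ = ‖p.1‖ := by
  have := h.inner_rel p hp p hp
  rw [inner_self_eq_norm_sq_to_K, inner_self_eq_norm_sq_to_K] at this
  have h2 : ((‖p.2‖ : ℂ)) ^ 2 = ((‖p.1‖ : ℂ)) ^ 2 := by simpa using this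
  have h3 : (‖p.2‖ : ℝ) ^ 2 = (‖p.1‖ : ℝ) ^ 2 := by exact_mod_cast h2
  nlinarith [norm_nonneg p.1, norm_nonneg p.2]

theorem sub_mem (h : IsConjGraph M Γ) {p q : H × H} (hp : p ∈ Γ) (hq : q ∈ Γ) :
    p - q ∈ Γ := by
  have h1 := h.smul_mem q hq (-1)
  simp only [neg_smul, one_smul, map_neg, map_one] at h1
  have := h.add_mem p hp _ h1
  rw [sub_eq_add_neg]
  exact this

theorem unique (h : IsConjGraph M Γ) {x y y' : H} (hy : (x, y) ∈ Γ) (hy' : (x, y') ∈ Γ) :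
    y = y' := by
  have hs := h.sub_mem hy hy'
  have := h.norm_eq hs
  simp only [Prod.fst_sub, Prod.snd_sub, sub_self, norm_zero] at this
  have h0 : ‖y - y'‖ = 0 := by simpa using this
  have : y - y' = 0 := norm_eq_zero.mp h0
  exact sub_eq_zero.mp this

theorem sUnion (c : Set (Set (H × H))) (hc : IsChain (· ⊆ ·) c) (hne : c.Nonempty)
    (hall : ∀ Γ ∈ c, IsConjGraph M Γ) : IsConjGraph M (⋃₀ c) := by
  obtain ⟨Γ₀, hΓ₀⟩ := hne
  constructor
  · exact Set.mem_sUnion.2 ⟨Γ₀, hΓ₀, (hall _ hΓ₀).zero_mem⟩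
  · rintro p hp q hq
    obtain ⟨Γ₁, h1, hp1⟩ := hp
    obtain ⟨Γ₂, h2, hq2⟩ := hq
    rcases hc.total h1 h2 with h | h
    · exact Set.mem_sUnion.2 ⟨Γ₂, h2, (hall _ h2).add_mem p (h hp1) q hq2⟩
    · exact Set.mem_sUnion.2 ⟨Γ₁, h1, (hall _ h1).add_mem p hp1 q (h hq2)⟩
  · rintro p ⟨Γ₁, h1, hp1⟩ c'
    exact Set.mem_sUnion.2 ⟨Γ₁, h1, (hall _ h1).smul_mem p hp1 c'⟩
  · rintro p ⟨Γ₁, h1, hp1⟩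
    exact Set.mem_sUnion.2 ⟨Γ₁, h1, (hall _ h1).symm_mem p hp1⟩
  · rintro p hp q hq
    obtain ⟨Γ₁, h1, hp1⟩ := hp
    obtain ⟨Γ₂, h2, hq2⟩ := hq
    rcases hc.total h1 h2 with h | h
    · exact (hall _ h2).inner_rel p (h hp1) q hq2
    · exact (hall _ h1).inner_rel p hp1 q (h hq2)
  · rintro p ⟨Γ₁, h1, hp1⟩ A hA
    exact Set.mem_sUnion.2 ⟨Γ₁, h1, (hall _ h1).apply_mem p hp1 A hA⟩

theorem closure_isConjGraph (h : IsConjGraph M Γ) : IsConjGraph M (closure Γ) := by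
  constructor
  · exact subset_closure h.zero_mem
  · intro p hp q hq
    exact map_mem_closure₂ continuous_add hp hq (fun a ha b hb => h.add_mem a ha b hb)
  · intro p hp c
    exact map_mem_closure (f := fun q : H × H => ((c • q.1 : H), ((starRingEnd ℂ c) • q.2 : H)))
      (by fun_prop) hp (fun a ha => h.smul_mem a ha c)
  · intro p hp
    exact map_mem_closure (f := fun q : H × H => ((q.2 : H), (q.1 : H)))
      (by fun_prop) hp (fun a ha => h.symm_mem a ha)
  · intro p hp q hq
    have hcl : IsClosed {r : (H × H) × (H × H) |
        ⟪r.1.2, r.2.2⟫ = starRingEnd ℂ ⟪r.1.1, r.2.1⟫} := by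
      apply isClosed_eq
      · exact Continuous.inner (by fun_prop) (by fun_prop)
      · exact Complex.continuous_conj.comp (Continuous.inner (by fun_prop) (by fun_prop))
    have hmem : (p, q) ∈ closure (Γ ×ˢ Γ) := by
      rw [closure_prod_eq]
      exact ⟨hp, hq⟩
    have hsub : Γ ×ˢ Γ ⊆ {r : (H × H) × (H × H) |
        ⟪r.1.2, r.2.2⟫ = starRingEnd ℂ ⟪r.1.1, r.2.1⟫} := by
      rintro ⟨a, b⟩ ⟨ha, hb⟩
      exact h.inner_rel a ha b hb
    exact hcl.closure_subset ((closure_mono hsub) hmem)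
  · intro p hp A hA
    exact map_mem_closure
      (f := fun q : H × H => ((A q.1 : H), (ContinuousLinearMap.adjoint A q.2 : H)))
      (by fun_prop) hp (fun a ha => h.apply_mem a ha A hA)

end IsConjGraph

theorem star_adjoint_mem (M : VonNeumannAlgebra H) {A : H →L[ℂ] H} (hA : A ∈ M) :
    ContinuousLinearMap.adjoint A ∈ M := by
  rw [← ContinuousLinearMap.star_eq_adjoint]
  exact star_mem hA

theorem exists_conjugation (M : VonNeumannAlgebra H)
    (hM : ∀ A ∈ M, ∀ B ∈ M, A * B = B * A) :
    ∃ J : H ≃ₗᵢ⋆[ℂ] H, (∀ x, J (J x) = x) ∧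
      ∀ A ∈ M, ∀ x : H, J (A x) = ContinuousLinearMap.adjoint A (J x) := by
  classical
  -- Zorn's lemma to produce a maximal conjugation graph
  obtain ⟨Γ, -, hmax⟩ := zorn_subset_nonempty {Γ : Set (H × H) | IsConjGraph M Γ}
    (fun c hc hchain hne => ⟨⋃₀ c, IsConjGraph.sUnion c hchain hne (fun Γ hΓ => hc hΓ),
      fun s hs => Set.subset_sUnion_of_mem hs⟩)
    {((0 : H), (0 : H))}
    (by
      constructor <;> simp_all [Set.mem_singleton_iff, Prod.ext_iff])
  have hG : IsConjGraph M Γ := hmax.1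
  -- Γ is closed
  have hclosed : IsClosed Γ := by
    have h1 : closure Γ ⊆ Γ := hmax.2 hG.closure_isConjGraph subset_closure
    exact isClosed_of_closure_subset h1
  -- the domain of Γ as a submodule
  set dom : Submodule ℂ H :=
    { carrier := Prod.fst '' Γ
      add_mem' := by
        rintro a b ⟨p, hp, rfl⟩ ⟨q, hq, rfl⟩
        exact ⟨p + q, hG.add_mem p hp q hq, rfl⟩
      zero_mem' := ⟨((0 : H), (0 : H)), hG.zero_mem, rfl⟩
      smul_mem' := by
        rintro c a ⟨p, hp, rfl⟩
        exact ⟨_, hG.smul_mem p hp c, rfl⟩ } with hdom_def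
  have hmem_dom : ∀ x : H, x ∈ dom ↔ x ∈ Prod.fst '' Γ := fun x => Iff.rfl
  -- the domain is closed
  have hdom_closed : IsClosed (dom : Set H) := by
    apply IsSeqClosed.isClosed
    intro u x hu hux
    choose p hp hp1 using hu
    have hcu : CauchySeq u := hux.cauchySeq
    have hdist : ∀ m n : ℕ, dist ((p m).2) ((p n).2) = dist (u m) (u n) := by
      intro m n
      have hsub := hG.sub_mem (hp m) (hp n)
      have := hG.norm_eq hsub
      simp only [Prod.fst_sub, Prod.snd_sub] at this
      rw [dist_eq_norm, dist_eq_norm, this, hp1, hp1]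
    have hcy : CauchySeq fun n => (p n).2 := by
      rw [Metric.cauchySeq_iff] at hcu ⊢
      intro ε hε
      obtain ⟨N, hN⟩ := hcu ε hε
      exact ⟨N, fun m hm n hn => by rw [hdist]; exact hN m hm n hn⟩
    obtain ⟨l, hl⟩ := cauchySeq_tendsto_of_complete hcy
    have hpt : Filter.Tendsto p Filter.atTop (nhds (x, l)) := by
      have : Filter.Tendsto (fun n => (u n, (p n).2)) Filter.atTop (nhds (x, l)) :=
        hux.prodMk_nhds hl
      convert this using 2 with n
      exact Prod.ext (hp1 n) rfl
    exact ⟨(x, l), hclosed.mem_of_tendsto hpt (Filter.Eventually.of_forall hp), rfl⟩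
  -- domain facts
  have hranΓ : ∀ p ∈ Γ, (p.2 : H) ∈ dom := fun p hp => ⟨(p.2, p.1), hG.symm_mem p hp, rfl⟩
  have hfstΓ : ∀ p ∈ Γ, (p.1 : H) ∈ dom := fun p hp => ⟨p, hp, rfl⟩
  have hdomM : ∀ x ∈ dom, ∀ A : H →L[ℂ] H, A ∈ M → A x ∈ dom := by
    rintro x ⟨q, hq, rfl⟩ A hA
    exact ⟨_, hG.apply_mem q hq A hA, rfl⟩
  -- the domain is everything
  have hdom_top : dom = ⊤ := by
    by_contra hne
    haveI : CompleteSpace dom := hdom_closed.completeSpace_coe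
    have horth : domᗮ ≠ ⊥ := fun h => hne (Submodule.orthogonal_eq_bot_iff.mp h)
    obtain ⟨ξ, hξd, hξ0⟩ := Submodule.ne_bot_iff _ |>.mp horth
    have hξ_orth : ∀ u ∈ dom, ⟪u, ξ⟫ = 0 := (Submodule.mem_orthogonal _ _).mp hξd
    have hcross : ∀ x ∈ dom, ∀ A : H →L[ℂ] H, A ∈ M → ⟪A ξ, x⟫ = 0 := by
      intro x hx A hA
      have h1 : ContinuousLinearMap.adjoint A x ∈ dom :=
        hdomM x hx _ (star_adjoint_mem M hA)
      have h2 : ⟪ξ, ContinuousLinearMap.adjoint A x⟫ = 0 := by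
        rw [← inner_conj_symm, hξ_orth _ h1, map_zero]
      rw [← ContinuousLinearMap.adjoint_inner_right, h2]
    set Γ' : Set (H × H) :=
      {r | ∃ p ∈ Γ, ∃ A : H →L[ℂ] H, A ∈ M ∧
        r = p + ((A ξ : H), (ContinuousLinearMap.adjoint A ξ : H))} with hΓ'_def
    have hG' : IsConjGraph M Γ' := by
      constructor
      · exact ⟨_, hG.zero_mem, 0, zero_mem M, by simp⟩
      · rintro _ ⟨p, hp, A, hA, rfl⟩ _ ⟨q, hq, B, hB, rfl⟩
        refine ⟨p + q, hG.add_mem p hp q hq, A + B, add_mem hA hB, ?_⟩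
        rw [Prod.ext_iff]
        constructor <;> simp <;> abel
      · rintro _ ⟨p, hp, A, hA, rfl⟩ c
        refine ⟨_, hG.smul_mem p hp c, c • A, M.toSubalgebra.smul_mem hA c, ?_⟩
        rw [Prod.ext_iff]
        constructor
        · simp [smul_add]
        · simp only [Prod.snd_add, smul_add]
          congr 1
          rw [← ContinuousLinearMap.star_eq_adjoint, ← ContinuousLinearMap.star_eq_adjoint,
            star_smul]
          simp
      · rintro _ ⟨p, hp, A, hA, rfl⟩
        refine ⟨_, hG.symm_mem p hp, ContinuousLinearMap.adjoint A, star_adjoint_mem M hA, ?_⟩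
        rw [Prod.ext_iff]
        constructor
        · simp
        · simp [ContinuousLinearMap.adjoint_adjoint]
      · rintro _ ⟨p, hp, A, hA, rfl⟩ _ ⟨q, hq, B, hB, rfl⟩
        have hBs : ContinuousLinearMap.adjoint B ∈ M := star_adjoint_mem M hB
        have hAs : ContinuousLinearMap.adjoint A ∈ M := star_adjoint_mem M hA
        have key : ⟪(ContinuousLinearMap.adjoint A) ξ, (ContinuousLinearMap.adjoint B) ξ⟫
            = starRingEnd ℂ ⟪A ξ, B ξ⟫ := by
          have hcomm : A * ContinuousLinearMap.adjoint B
              = ContinuousLinearMap.adjoint B * A := hM A hA _ hBs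
          calc ⟪(ContinuousLinearMap.adjoint A) ξ, (ContinuousLinearMap.adjoint B) ξ⟫
              = ⟪ξ, A ((ContinuousLinearMap.adjoint B) ξ)⟫ :=
                ContinuousLinearMap.adjoint_inner_left A ((ContinuousLinearMap.adjoint B) ξ) ξ
            _ = ⟪ξ, (ContinuousLinearMap.adjoint B) (A ξ)⟫ := by
                rw [← ContinuousLinearMap.mul_apply, hcomm, ContinuousLinearMap.mul_apply]
            _ = ⟪B ξ, A ξ⟫ := ContinuousLinearMap.adjoint_inner_right B ξ (A ξ)
            _ = starRingEnd ℂ ⟪A ξ, B ξ⟫ := (inner_conj_symm _ _).symm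
        have z1 : ⟪p.2, (ContinuousLinearMap.adjoint B) ξ⟫ = 0 :=
          inner_eq_zero_symm.mpr (hcross p.2 (hranΓ p hp) _ hBs)
        have z2 : ⟪(ContinuousLinearMap.adjoint A) ξ, q.2⟫ = 0 :=
          hcross q.2 (hranΓ q hq) _ hAs
        have z3 : ⟪p.1, B ξ⟫ = 0 := inner_eq_zero_symm.mpr (hcross p.1 (hfstΓ p hp) _ hB)
        have z4 : ⟪A ξ, q.1⟫ = 0 := hcross q.1 (hfstΓ q hq) _ hA
        simp only [Prod.fst_add, Prod.snd_add, inner_add_left, inner_add_right, map_add,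
          hG.inner_rel p hp q hq, key, z1, z2, z3, z4, map_zero, add_zero, zero_add]
      · rintro _ ⟨p, hp, A, hA, rfl⟩ B hB
        refine ⟨_, hG.apply_mem p hp B hB, B * A, mul_mem hB hA, ?_⟩
        rw [Prod.ext_iff]
        constructor
        · simp [map_add]
        · simp only [Prod.snd_add, map_add]
          congr 1
          have h1 : ContinuousLinearMap.adjoint (B * A)
              = ContinuousLinearMap.adjoint A * ContinuousLinearMap.adjoint B := by
            rw [← ContinuousLinearMap.star_eq_adjoint, ← ContinuousLinearMap.star_eq_adjoint,
              ← ContinuousLinearMap.star_eq_adjoint, star_mul]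
          rw [h1, hM _ (star_adjoint_mem M hA) _ (star_adjoint_mem M hB)]
          rfl
    have hsub : Γ ⊆ Γ' := by
      intro p hp
      exact ⟨p, hp, 0, zero_mem M, by simp⟩
    have heq : Γ' ⊆ Γ := hmax.2 hG' hsub
    have hξΓ : ((ξ : H), (ξ : H)) ∈ Γ := by
      apply heq
      rw [hΓ'_def]; simp only [Set.mem_setOf_eq]
      refine ⟨0, hG.zero_mem, 1, one_mem M, ?_⟩
      rw [← ContinuousLinearMap.star_eq_adjoint, star_one]
      simp
    have : ξ ∈ dom := hfstΓ _ hξΓ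
    exact hξ0 (inner_self_eq_zero.mp (hξ_orth ξ this))
  -- construct the conjugation
  have htot : ∀ x : H, ∃ y, (x, y) ∈ Γ := by
    intro x
    have hx : x ∈ dom := hdom_top ▸ Submodule.mem_top
    obtain ⟨p, hp, hp1⟩ := hx
    exact ⟨p.2, by rwa [show (x, p.2) = p from Prod.ext hp1.symm rfl]⟩
  choose Jf hJf using htot
  have huniq : ∀ {x y : H}, (x, y) ∈ Γ → Jf x = y := fun {x y} h => hG.unique (hJf x) h
  have hJJ : ∀ x, Jf (Jf x) = x := fun x => huniq (hG.symm_mem _ (hJf x))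
  let Jeq : H ≃ₛₗ[starRingEnd ℂ] H :=
    { toFun := Jf
      map_add' := fun x y => huniq (by simpa using hG.add_mem _ (hJf x) _ (hJf y))
      map_smul' := fun c x => huniq (by simpa using hG.smul_mem _ (hJf x) c)
      invFun := Jf
      left_inv := hJJ
      right_inv := hJJ }
  refine ⟨LinearIsometryEquiv.mk Jeq (fun x => hG.norm_eq (hJf x)), hJJ, ?_⟩
  intro A hA x
  exact huniq (x := A x) (y := ContinuousLinearMap.adjoint A (Jf x)) (hG.apply_mem _ (hJf x) A hA)

theorem isUnit_smul_of_ne_zero {c : ℂ} (hc : c ≠ 0) {X : H →L[ℂ] H} (hX : IsUnit X) :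
    IsUnit (c • X) := by
  obtain ⟨u, rfl⟩ := hX
  refine ⟨⟨c • (u : H →L[ℂ] H), c⁻¹ • ((u⁻¹ : (H →L[ℂ] H)ˣ) : H →L[ℂ] H), ?_, ?_⟩, rfl⟩
  · rw [smul_mul_smul_comm, mul_inv_cancel₀ hc]
    simp
  · rw [smul_mul_smul_comm, inv_mul_cancel₀ hc]
    simp

theorem selfAdjoint_of_nonneg {A : H →L[ℂ] H} (hpos : ∀ x : H, 0 ≤ (⟪A x, x⟫ : ℂ)) :
    IsSelfAdjoint A := by
  have hreal : ∀ x : H, starRingEnd ℂ ⟪A x, x⟫ = ⟪A x, x⟫ := by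
    intro x
    exact Complex.conj_eq_iff_im.mpr (Complex.nonneg_iff.mp (hpos x)).2.symm
  have hzero : ∀ x : H, ⟪(A - ContinuousLinearMap.adjoint A) x, x⟫ = (0 : ℂ) := by
    intro x
    have h1 : ⟪(ContinuousLinearMap.adjoint A) x, x⟫ = ⟪A x, x⟫ := by
      rw [ContinuousLinearMap.adjoint_inner_left, ← inner_conj_symm, hreal]
    simp [inner_sub_left, h1]
  have hT : ((A - ContinuousLinearMap.adjoint A : H →L[ℂ] H) : H →ₗ[ℂ] H) = 0 :=
    (inner_map_self_eq_zero _).mp (fun x => hzero x)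
  have h2 : (A - ContinuousLinearMap.adjoint A : H →L[ℂ] H) = 0 := by
    ext x
    exact congrFun (congrArg DFunLike.coe hT) x
  rw [ContinuousLinearMap.isSelfAdjoint_iff']
  have := sub_eq_zero.mp h2
  exact this.symm

theorem comm_of_b (M : VonNeumannAlgebra H)
    (h : ∃ J : H ≃ₗᵢ⋆[ℂ] H, ∀ A ∈ M, ∀ x : H,
      J (A (J.symm x)) = ContinuousLinearMap.adjoint A x) :
    ∀ A ∈ M, ∀ B ∈ M, A * B = B * A := by
  obtain ⟨J, hJ⟩ := h
  have h1 : ∀ A ∈ M, ∀ B ∈ M,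
      ContinuousLinearMap.adjoint A * ContinuousLinearMap.adjoint B
        = ContinuousLinearMap.adjoint (A * B) := by
    intro A hA B hB
    ext x
    have e1 : J.symm (ContinuousLinearMap.adjoint B x) = B (J.symm x) := by
      rw [← hJ B hB x, LinearIsometryEquiv.symm_apply_apply]
    calc (ContinuousLinearMap.adjoint A * ContinuousLinearMap.adjoint B) x
        = ContinuousLinearMap.adjoint A (ContinuousLinearMap.adjoint B x) := rfl
      _ = J (A (J.symm (ContinuousLinearMap.adjoint B x))) :=
          (hJ A hA (ContinuousLinearMap.adjoint B x)).symm
      _ = J ((A * B) (J.symm x)) := by rw [e1]; rfl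
      _ = ContinuousLinearMap.adjoint (A * B) x := hJ _ (mul_mem hA hB) x
  intro A hA B hB
  have h2 := h1 (star A) (star_mem hA) (star B) (star_mem hB)
  have h3 := h1 (star B) (star_mem hB) (star A) (star_mem hA)
  simp only [← ContinuousLinearMap.star_eq_adjoint, star_star, star_mul] at h2 h3
  rw [← h2, ← h3]

theorem comm_of_c (M : VonNeumannAlgebra H)
    (h : ∃ J : H ≃ₗᵢ⋆[ℂ] H, ∀ A ∈ M, IsSelfAdjoint A → ∀ x : H, J (A x) = A (J x)) :
    ∀ A ∈ M, ∀ B ∈ M, A * B = B * A := by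
  obtain ⟨J, hJ⟩ := h
  have step1 : ∀ A ∈ M, IsSelfAdjoint A → ∀ B ∈ M, IsSelfAdjoint B → A * B = B * A := by
    intro A hA hsA B hB hsB
    set C : H →L[ℂ] H := A * B - B * A with hC_def
    have hCM : C ∈ M := sub_mem (mul_mem hA hB) (mul_mem hB hA)
    have hJC : ∀ x : H, J (C x) = C (J x) := by
      intro x
      simp only [hC_def, ContinuousLinearMap.sub_apply, ContinuousLinearMap.mul_apply,
        map_sub]
      rw [hJ A hA hsA, hJ B hB hsB, hJ B hB hsB, hJ A hA hsA]
    have hsD : IsSelfAdjoint (Complex.I • C) := by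
      have hstarC : star C = -C := by
        simp only [hC_def, star_sub, star_mul, hsA.star_eq, hsB.star_eq]
        abel
      rw [IsSelfAdjoint, star_smul, hstarC]
      simp [Complex.conj_I]
    have hDM : Complex.I • C ∈ M := M.toSubalgebra.smul_mem hCM Complex.I
    have hCzero : ∀ x : H, C (J x) = 0 := by
      intro x
      have := hJ _ hDM hsD x
      rw [ContinuousLinearMap.smul_apply, ContinuousLinearMap.smul_apply,
        LinearIsometryEquiv.map_smulₛₗ, hJC] at this
      have h2 : (Complex.I - starRingEnd ℂ Complex.I) • C (J x) = 0 := by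
        rw [sub_smul, this, sub_self]
      have h3 : (Complex.I - starRingEnd ℂ Complex.I) ≠ 0 := by
        rw [Complex.conj_I]
        norm_num [Complex.ext_iff]
      exact (smul_eq_zero.mp h2).resolve_left h3
    have hC0 : C = 0 := by
      ext y
      have := hCzero (J.symm y)
      rwa [LinearIsometryEquiv.apply_symm_apply] at this
    rw [hC_def] at hC0
    exact sub_eq_zero.mp hC0
  have hsplit : ∀ A ∈ M, ∃ P Q : H →L[ℂ] H, P ∈ M ∧ Q ∈ M ∧ IsSelfAdjoint P ∧
      IsSelfAdjoint Q ∧ A = P + Complex.I • Q := by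
    intro A hA
    have hAs : star A ∈ M := star_mem hA
    have m1 : A + star A ∈ M := add_mem hA hAs
    have m2 : A - star A ∈ M := sub_mem hA hAs
    refine ⟨(2⁻¹ : ℂ) • (A + star A), (-Complex.I * 2⁻¹) • (A - star A),
      M.toSubalgebra.smul_mem m1 _, M.toSubalgebra.smul_mem m2 _, ?_, ?_, ?_⟩
    · rw [IsSelfAdjoint, star_smul, star_add, star_star]
      rw [show star (2⁻¹ : ℂ) = 2⁻¹ by norm_num [Complex.ext_iff]]
      rw [add_comm]
    · rw [IsSelfAdjoint, star_smul, star_sub, star_star]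
      rw [show star (-Complex.I * 2⁻¹ : ℂ) = Complex.I * 2⁻¹ by norm_num [Complex.ext_iff]]
      module
    · have : Complex.I * (-Complex.I * 2⁻¹) = 2⁻¹ := by
        rw [show Complex.I * (-Complex.I * 2⁻¹) = -(Complex.I * Complex.I) * 2⁻¹ by ring,
          Complex.I_mul_I]
        ring
      rw [smul_smul, this]
      module
  intro A hA B hB
  obtain ⟨P, Q, hPM, hQM, hsP, hsQ, rfl⟩ := hsplit A hA
  obtain ⟨R, S, hRM, hSM, hsR, hsS, rfl⟩ := hsplit B hB
  have expand : ∀ X Y Z W : H →L[ℂ] H, (X + Complex.I • Y) * (Z + Complex.I • W)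
      = X * Z + Complex.I • (X * W) + Complex.I • (Y * Z)
        + (Complex.I * Complex.I) • (Y * W) := by
    intro X Y Z W
    simp only [add_mul, mul_add, smul_mul_assoc, mul_smul_comm, smul_smul, smul_add]
    abel
  rw [expand, expand, step1 P hPM hsP R hRM hsR, step1 P hPM hsP S hSM hsS,
    step1 Q hQM hsQ R hRM hsR, step1 Q hQM hsQ S hSM hsS]
  abel

theorem comm_of_d (M : VonNeumannAlgebra H)
    (h : ∃ J : H ≃ₗᵢ⋆[ℂ] H, ∀ A ∈ M,
      (∀ x : H, 0 ≤ (⟪A x, x⟫ : ℂ)) → IsUnit A → ∀ x : H, J (A x) = A (J x)) :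
    ∀ A ∈ M, ∀ B ∈ M, A * B = B * A := by
  obtain ⟨J, hJ⟩ := h
  apply comm_of_c M
  refine ⟨J, ?_⟩
  intro A hA hsA x
  set t : ℝ := ‖A‖ + 1 with ht_def
  have ht_pos : (0 : ℝ) < t := by positivity
  set B : H →L[ℂ] H := A + (t : ℂ) • 1 with hB_def
  have hBM : B ∈ M := add_mem hA (M.toSubalgebra.smul_mem (one_mem M) _)
  have hBx : ∀ y : H, B y = A y + (t : ℂ) • y := by
    intro y
    simp [hB_def]
  have hadjA : ContinuousLinearMap.adjoint A = A := by
    rw [← ContinuousLinearMap.star_eq_adjoint]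
    exact hsA.star_eq
  have hpos : ∀ y : H, 0 ≤ (⟪B y, y⟫ : ℂ) := by
    intro y
    have hreal : starRingEnd ℂ ⟪A y, y⟫ = ⟪A y, y⟫ := by
      rw [inner_conj_symm, ← ContinuousLinearMap.adjoint_inner_left, hadjA]
    have him : (⟪A y, y⟫ : ℂ).im = 0 := Complex.conj_eq_iff_im.mp hreal
    have hbound : |(⟪A y, y⟫ : ℂ).re| ≤ ‖A‖ * ‖y‖ ^ 2 := by
      have h1 : ‖(⟪A y, y⟫ : ℂ)‖ ≤ ‖A y‖ * ‖y‖ := norm_inner_le_norm _ _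
      have h2 : ‖A y‖ ≤ ‖A‖ * ‖y‖ := A.le_opNorm y
      have h3 : |(⟪A y, y⟫ : ℂ).re| ≤ ‖(⟪A y, y⟫ : ℂ)‖ := Complex.abs_re_le_norm _
      nlinarith [norm_nonneg y, norm_nonneg (A y), norm_nonneg A]
    have hyy : (⟪y, y⟫ : ℂ) = ((‖y‖ ^ 2 : ℝ) : ℂ) := by
      rw [inner_self_eq_norm_sq_to_K]
      norm_cast
    rw [hBx, inner_add_left, inner_smul_left, Complex.conj_ofReal, hyy,
      ← Complex.ofReal_mul]
    rw [Complex.nonneg_iff]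
    constructor
    · simp only [Complex.add_re, Complex.ofReal_re]
      have hb := abs_le.mp hbound
      rw [ht_def]
      nlinarith [sq_nonneg ‖y‖, hb.1, hb.2]
    · simp only [Complex.add_im, him, Complex.ofReal_im, add_zero]
  have hunit : IsUnit B := by
    have hC : ((t : ℂ))⁻¹ • B = 1 - (-(((t : ℂ))⁻¹) • A) := by
      rw [hB_def, smul_add, smul_smul]
      rw [inv_mul_cancel₀ (by exact_mod_cast ht_pos.ne')]
      module
    have hlt : ‖(-(((t : ℂ))⁻¹) • A)‖ < 1 := by
      rw [norm_smul, norm_neg]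
      have : ‖((t : ℂ))⁻¹‖ = t⁻¹ := by
        rw [norm_inv, Complex.norm_real, Real.norm_of_nonneg ht_pos.le]
      rw [this]
      rw [ht_def]
      have hA0 : (0:ℝ) ≤ ‖A‖ := norm_nonneg A
      rw [inv_mul_lt_iff₀ (by linarith)]
      linarith
    have hu1 : IsUnit (((t : ℂ))⁻¹ • B) := by
      rw [hC]
      exact (Units.oneSub _ hlt).isUnit
    have : B = (t : ℂ) • (((t : ℂ))⁻¹ • B) := by
      rw [smul_smul, mul_inv_cancel₀ (by exact_mod_cast ht_pos.ne'), one_smul]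
    rw [this]
    exact isUnit_smul_of_ne_zero (by exact_mod_cast ht_pos.ne') hu1
  have hmain := hJ B hBM hpos hunit x
  rw [hBx, hBx, map_add, LinearIsometryEquiv.map_smulₛₗ, Complex.conj_ofReal] at hmain
  exact add_right_cancel hmain

end

/-- **Lemma (equivalence of commutativity criteria via antiunitary operators).**
Let `M` be a von Neumann algebra on a complex Hilbert space `H`. The following are
equivalent: (a) `M` is commutative; (b) there is an antiunitary `J` on `H` (a bijective
conjugate-linear isometry, modeled as `H ≃ₗᵢ⋆[ℂ] H`) with `J A J⁻¹ = A*` for `A ∈ M`;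
(c) there is an antiunitary `J` commuting with every selfadjoint element of `M`;
(d) there is an antiunitary `J` commuting with every positive invertible element of `M`. -/
theorem vonNeumann_commutative_iff_antiunitary
    {H : Type*} [NormedAddCommGroup H] [InnerProductSpace ℂ H] [CompleteSpace H]
    (M : VonNeumannAlgebra H) :
    ((∀ A ∈ M, ∀ B ∈ M, A * B = B * A) ↔
      (∃ J : H ≃ₗᵢ⋆[ℂ] H, ∀ A ∈ M, ∀ x : H,
        J (A (J.symm x)) = ContinuousLinearMap.adjoint A x)) ∧
    ((∀ A ∈ M, ∀ B ∈ M, A * B = B * A) ↔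
      (∃ J : H ≃ₗᵢ⋆[ℂ] H, ∀ A ∈ M, IsSelfAdjoint A → ∀ x : H, J (A x) = A (J x))) ∧
    ((∀ A ∈ M, ∀ B ∈ M, A * B = B * A) ↔
      (∃ J : H ≃ₗᵢ⋆[ℂ] H, ∀ A ∈ M,
        (∀ x : H, 0 ≤ (inner ℂ (A x) x : ℂ)) → IsUnit A →
        ∀ x : H, J (A x) = A (J x))) := by
  have hadj_eq : ∀ A : H →L[ℂ] H, IsSelfAdjoint A → ContinuousLinearMap.adjoint A = A := by
    intro A hsA
    rw [← ContinuousLinearMap.star_eq_adjoint]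
    exact hsA.star_eq
  refine ⟨⟨?_, comm_of_b M⟩, ⟨?_, comm_of_c M⟩, ⟨?_, comm_of_d M⟩⟩
  · intro hM
    obtain ⟨J, hJJ, hJ⟩ := exists_conjugation M hM
    refine ⟨J, fun A hA x => ?_⟩
    have hsymm : J.symm x = J x :=
      J.injective (by rw [LinearIsometryEquiv.apply_symm_apply, hJJ])
    rw [hsymm, hJ A hA (J x), hJJ]
  · intro hM
    obtain ⟨J, hJJ, hJ⟩ := exists_conjugation M hM
    refine ⟨J, fun A hA hsA x => ?_⟩
    rw [hJ A hA x, hadj_eq A hsA]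
  · intro hM
    obtain ⟨J, hJJ, hJ⟩ := exists_conjugation M hM
    refine ⟨J, fun A hA hpos hunit x => ?_⟩
    rw [hJ A hA x, hadj_eq A (selfAdjoint_of_nonneg hpos)]
end

section
/- Let M be a commutative von Neumann algebra on a complex Hilbert space H. Then there exists an antiunitary operator J on H such that J A J⁻¹ = A* for every A ∈ M (equivalently, J commutes with every selfadjoint element of M). -/
open scoped ComplexConjugate

noncomputable section

namespace ExistsAntiunitaryAux

variable {H : Type*} [NormedAddCommGroup H] [InnerProductSpace ℂ H] [CompleteSpace H]

local notation "⟪" x ", " y "⟫" => @inner ℂ _ _ x y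

/-- Index type: pairs of an operator in `M` and a vector in `S`. -/
def Idx (M : VonNeumannAlgebra H) (S : Set H) : Type _ :=
  {p : (H →L[ℂ] H) × H // p.1 ∈ M ∧ p.2 ∈ S}

variable {M : VonNeumannAlgebra H} {S : Set H}

/-- The vector `A x` associated to an index `(A, x)`. -/
def gen (p : Idx M S) : H := p.1.1 p.1.2

/-- The star operation on indices. -/
def sig (p : Idx M S) : Idx M S := ⟨(star p.1.1, p.1.2), star_mem p.2.1, p.2.2⟩

lemma sig_sig (p : Idx M S) : sig (sig p) = p := by
  obtain ⟨⟨A, x⟩, hA, hx⟩ := p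
  simp [sig]
  rfl

/-- Left multiplication by `A ∈ M` on indices. -/
def tau (A : H →L[ℂ] H) (hA : A ∈ M) (p : Idx M S) : Idx M S :=
  ⟨(A * p.1.1, p.1.2), mul_mem hA p.2.1, p.2.2⟩

variable (M S) in
/-- The linear map sending a formal combination of indices to the corresponding vector. -/
def fmap : (Idx M S →₀ ℂ) →ₗ[ℂ] H := Finsupp.linearCombination ℂ gen

/-- Conjugation on formal combinations. -/
def conjD (l : Idx M S →₀ ℂ) : Idx M S →₀ ℂ :=
  Finsupp.mapDomain sig (Finsupp.mapRange (starRingEnd ℂ) (map_zero _) l)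

variable (M S) in
/-- The "adjoint" map on vectors coming from formal combinations. -/
def gmap (l : Idx M S →₀ ℂ) : H := fmap M S (conjD l)

lemma fmap_apply (l : Idx M S →₀ ℂ) : fmap M S l = l.sum fun p c => c • gen p :=
  Finsupp.linearCombination_apply ℂ l

lemma gmap_apply (l : Idx M S →₀ ℂ) :
    gmap M S l = l.sum fun p c => (conj c) • gen (sig p) := by
  rw [gmap, conjD, fmap, Finsupp.linearCombination_mapDomain,
    Finsupp.linearCombination_apply]
  exact Finsupp.sum_mapRange_index (by simp)

lemma gmap_add (l m : Idx M S →₀ ℂ) : gmap M S (l + m) = gmap M S l + gmap M S m := by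
  rw [gmap, gmap, gmap, conjD, conjD, conjD, Finsupp.mapRange_add (map_add _),
    Finsupp.mapDomain_add, map_add]

lemma conjD_sub (l m : Idx M S →₀ ℂ) : conjD (l - m) = conjD l - conjD m := by
  rw [conjD, conjD, conjD, Finsupp.mapRange_sub (map_sub _)]
  exact map_sub (Finsupp.mapDomain.addMonoidHom sig) _ _

lemma gmap_sub (l m : Idx M S →₀ ℂ) : gmap M S (l - m) = gmap M S l - gmap M S m := by
  rw [gmap, gmap, gmap, conjD_sub, map_sub]

lemma conjD_smul (c : ℂ) (l : Idx M S →₀ ℂ) : conjD (c • l) = conj c • conjD l := by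
  rw [conjD, conjD, ← Finsupp.mapDomain_smul]
  congr 1
  ext p
  simp [Finsupp.mapRange_apply, map_mul]

lemma gmap_smul (c : ℂ) (l : Idx M S →₀ ℂ) : gmap M S (c • l) = conj c • gmap M S l := by
  rw [gmap, gmap, conjD_smul, map_smul]

lemma gmap_conjD (l : Idx M S →₀ ℂ) : gmap M S (conjD l) = fmap M S l := by
  rw [gmap_apply, conjD,
    Finsupp.sum_mapDomain_index (fun p => by simp)
      (fun p c d => by rw [map_add, add_smul]),
    Finsupp.sum_mapRange_index (by simp), fmap_apply]
  exact Finsupp.sum_congr fun p _ => by simp [sig_sig]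

section Core

variable (hM : ∀ A ∈ M, ∀ B ∈ M, A * B = B * A)
variable (hS : ∀ x ∈ S, ∀ y ∈ S, x ≠ y → ∀ A ∈ M, ∀ B ∈ M, ⟪A x, B y⟫ = 0)

include hM hS in
lemma core_inner (p q : Idx M S) : ⟪gen (sig p), gen (sig q)⟫ = conj ⟪gen p, gen q⟫ := by
  obtain ⟨⟨A, x⟩, hA, hx⟩ := p
  obtain ⟨⟨B, y⟩, hB, hy⟩ := q
  show ⟪(star A) x, (star B) y⟫ = conj ⟪A x, B y⟫
  by_cases hxy : x = y
  · subst hxy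
    rw [ContinuousLinearMap.star_eq_adjoint, ContinuousLinearMap.adjoint_inner_left]
    have h1 : A ((star B) x) = (A * star B) x := rfl
    rw [h1, hM A hA (star B) (star_mem hB)]
    have h2 : (star B * A) x = (star B) (A x) := rfl
    rw [h2, ContinuousLinearMap.star_eq_adjoint, ContinuousLinearMap.adjoint_inner_right,
      inner_conj_symm]
  · rw [hS x hx y hy hxy (star A) (star_mem hA) (star B) (star_mem hB),
      hS x hx y hy hxy A hA B hB, map_zero]

include hM hS in
lemma key_inner (l m : Idx M S →₀ ℂ) :
    ⟪gmap M S l, gmap M S m⟫ = conj ⟪fmap M S l, fmap M S m⟫ := by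
  rw [gmap_apply, gmap_apply, fmap_apply, fmap_apply, Finsupp.sum, Finsupp.sum,
    Finsupp.sum, Finsupp.sum, sum_inner, sum_inner, map_sum]
  refine Finset.sum_congr rfl fun p _ => ?_
  rw [inner_sum, inner_sum, map_sum]
  refine Finset.sum_congr rfl fun q _ => ?_
  rw [inner_smul_left, inner_smul_right, inner_smul_left, inner_smul_right,
    core_inner hM hS p q]
  simp only [map_mul, Complex.conj_conj]
  try ring

include hM hS in
lemma norm_gmap (l : Idx M S →₀ ℂ) : ‖gmap M S l‖ = ‖fmap M S l‖ := by
  have h := key_inner hM hS l l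
  rw [inner_self_eq_norm_sq_to_K, inner_self_eq_norm_sq_to_K, map_pow,
    RCLike.conj_ofReal] at h
  have h2 : ‖gmap M S l‖ ^ 2 = ‖fmap M S l‖ ^ 2 := by exact_mod_cast h
  nlinarith [norm_nonneg (gmap M S l), norm_nonneg (fmap M S l)]

include hM hS in
lemma gmap_welldef {l m : Idx M S →₀ ℂ} (h : fmap M S l = fmap M S m) :
    gmap M S l = gmap M S m := by
  have : ‖gmap M S l - gmap M S m‖ = 0 := by
    rw [← gmap_sub, norm_gmap hM hS, map_sub, h, sub_self, norm_zero]
  rw [← sub_eq_zero]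
  exact norm_eq_zero.mp this

end Core

variable (M S) in
/-- The (partially defined) antiunitary, as a bare function. -/
def jfun : H → H := fun v =>
  letI : Decidable (∃ l, fmap M S l = v) := Classical.dec _
  if h : ∃ l, fmap M S l = v then gmap M S h.choose else 0

lemma jfun_fmap (hM : ∀ A ∈ M, ∀ B ∈ M, A * B = B * A)
    (hS : ∀ x ∈ S, ∀ y ∈ S, x ≠ y → ∀ A ∈ M, ∀ B ∈ M, ⟪A x, B y⟫ = 0)
    (l : Idx M S →₀ ℂ) : jfun M S (fmap M S l) = gmap M S l := by
  have hex : ∃ m, fmap M S m = fmap M S l := ⟨l, rfl⟩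
  classical
  rw [jfun]
  rw [dif_pos hex]
  exact gmap_welldef hM hS hex.choose_spec

lemma fmap_tau (A : H →L[ℂ] H) (hA : A ∈ M) (l : Idx M S →₀ ℂ) :
    fmap M S (Finsupp.mapDomain (tau A hA) l) = A (fmap M S l) := by
  rw [fmap, Finsupp.linearCombination_mapDomain, Finsupp.linearCombination_apply,
    ← fmap, fmap_apply, map_finsuppSum]
  refine Finsupp.sum_congr fun p _ => ?_
  rw [map_smul]
  rfl

lemma gmap_tau (hM : ∀ A ∈ M, ∀ B ∈ M, A * B = B * A)
    (A : H →L[ℂ] H) (hA : A ∈ M) (l : Idx M S →₀ ℂ) :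
    gmap M S (Finsupp.mapDomain (tau A hA) l) = (star A) (gmap M S l) := by
  rw [gmap_apply, gmap_apply,
    Finsupp.sum_mapDomain_index (fun p => by simp)
      (fun p c d => by rw [map_add, add_smul]),
    map_finsuppSum]
  refine Finsupp.sum_congr fun p _ => ?_
  rw [map_smul]
  congr 1
  obtain ⟨⟨B, x⟩, hB, hx⟩ := p
  show (star (A * B)) x = (star A) ((star B) x)
  rw [star_mul, hM (star B) (star_mem hB) (star A) (star_mem hA)]
  rfl

lemma dense_range_fmap (hM : ∀ A ∈ M, ∀ B ∈ M, A * B = B * A)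
    (hS : Maximal (fun s : Set H =>
      ∀ x ∈ s, ∀ y ∈ s, x ≠ y → ∀ A ∈ M, ∀ B ∈ M, ⟪A x, B y⟫ = 0) S) :
    Dense ((LinearMap.range (fmap M S) : Submodule ℂ H) : Set H) := by
  have hrange : LinearMap.range (fmap M S) =
      Submodule.span ℂ (Set.range (gen (M := M) (S := S))) := by
    unfold fmap
    exact Finsupp.range_linearCombination ℂ (v := gen)
  have horth : (Submodule.span ℂ (Set.range (gen (M := M) (S := S))))ᗮ = ⊥ := by
    rw [Submodule.eq_bot_iff]
    intro v hv
    by_contra hv0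
    have hperp : ∀ u ∈ Set.range (gen (M := M) (S := S)), ⟪u, v⟫ = 0 := fun u hu =>
      (Submodule.mem_orthogonal _ v).mp hv u (Submodule.subset_span hu)
    have hS' : ∀ x ∈ insert v S, ∀ y ∈ insert v S, x ≠ y →
        ∀ A ∈ M, ∀ B ∈ M, ⟪A x, B y⟫ = 0 := by
      intro x hx y hy hxy A hA B hB
      rcases hx with rfl | hx
      · rcases hy with rfl | hy
        · exact absurd rfl hxy
        · rw [← inner_conj_symm]
          have : ⟪B y, A x⟫ = ⟪(ContinuousLinearMap.adjoint A) (B y), x⟫ :=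
            (ContinuousLinearMap.adjoint_inner_left A x (B y)).symm
          rw [this]
          have hmem : (ContinuousLinearMap.adjoint A) (B y) ∈
              Set.range (gen (M := M) (S := S)) := by
            refine ⟨⟨(star A * B, y), mul_mem (star_mem hA) hB, hy⟩, ?_⟩
            show (star A * B) y = _
            rw [ContinuousLinearMap.star_eq_adjoint]
            rfl
          rw [hperp _ hmem, map_zero]
      · rcases hy with rfl | hy
        · have : ⟪A x, B y⟫ = ⟪(ContinuousLinearMap.adjoint B) (A x), y⟫ := by
            rw [ContinuousLinearMap.adjoint_inner_left]
          rw [this]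
          refine hperp _ ⟨⟨(star B * A, x), mul_mem (star_mem hB) hA, hx⟩, ?_⟩
          show (star B * A) x = _
          rw [ContinuousLinearMap.star_eq_adjoint]
          rfl
        · exact hS.1 x hx y hy hxy A hA B hB
    have hsub : insert v S ⊆ S := hS.2 hS' (Set.subset_insert v S)
    have hvS : v ∈ S := hsub (Set.mem_insert v S)
    have hvv : ⟪v, v⟫ = 0 := by
      refine hperp v ⟨⟨(1, v), one_mem M, hvS⟩, ?_⟩
      show (1 : H →L[ℂ] H) v = v
      rfl
    exact hv0 (inner_self_eq_zero.mp hvv)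
  have htop := Submodule.topologicalClosure_eq_top_iff.mpr horth
  rw [hrange]
  have : closure ((Submodule.span ℂ (Set.range (gen (M := M) (S := S)))) : Set H) =
      Set.univ := by
    have := congrArg (fun (K : Submodule ℂ H) => (K : Set H)) htop
    simpa [Submodule.topologicalClosure_coe] using this
  rw [dense_iff_closure_eq, this]

end ExistsAntiunitaryAux

open ExistsAntiunitaryAux

/-- If `M` is a commutative von Neumann algebra on a complex Hilbert space `H`, then there
exists an antiunitary operator `J` on `H` (a bijective conjugate-linear isometry, modeled
as `H ≃ₗᵢ⋆[ℂ] H`) such that `J A J⁻¹ = A*` for every `A ∈ M`. -/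
theorem exists_antiunitary_adjoint_of_vonNeumann_commutative
    {H : Type*} [NormedAddCommGroup H] [InnerProductSpace ℂ H] [CompleteSpace H]
    (M : VonNeumannAlgebra H) (hM : ∀ A ∈ M, ∀ B ∈ M, A * B = B * A) :
    ∃ J : H ≃ₗᵢ⋆[ℂ] H, ∀ A ∈ M, ∀ x : H,
      J (A (J.symm x)) = ContinuousLinearMap.adjoint A x := by
  classical
  -- Zorn's lemma: a maximal set of generating vectors with pairwise orthogonal cyclic subspaces
  have hzorn : ∀ c ⊆ {s : Set H | ∀ x ∈ s, ∀ y ∈ s, x ≠ y →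
        ∀ A ∈ M, ∀ B ∈ M, @inner ℂ _ _ (A x) (B y) = 0},
      IsChain (· ⊆ ·) c → ∃ ub ∈ {s : Set H | ∀ x ∈ s, ∀ y ∈ s, x ≠ y →
        ∀ A ∈ M, ∀ B ∈ M, @inner ℂ _ _ (A x) (B y) = 0}, ∀ s ∈ c, s ⊆ ub := by
    intro c hc hchain
    refine ⟨⋃₀ c, ?_, fun s hs => Set.subset_sUnion_of_mem hs⟩
    rintro x ⟨s₁, hs₁, hxs⟩ y ⟨s₂, hs₂, hys⟩ hxy A hA B hB
    rcases hchain.total hs₁ hs₂ with h | h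
    · exact hc hs₂ x (h hxs) y hys hxy A hA B hB
    · exact hc hs₁ x hxs y (h hys) hxy A hA B hB
  obtain ⟨S, hSmax⟩ := zorn_subset _ hzorn
  have hSpair := hSmax.1
  set R : Submodule ℂ H := LinearMap.range (fmap M S) with hR
  have hdense : Dense (R : Set H) := dense_range_fmap hM hSmax
  set Vr : Submodule ℝ H := Submodule.restrictScalars ℝ R with hVr
  have hdenseVr : Dense (Vr : Set H) := hdense
  have hrep : ∀ v : H, v ∈ Vr → ∃ l, fmap M S l = v := fun v hv => hv
  -- the conjugate-linear isometry on the dense subspace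
  let jlin : Vr →ₗ[ℝ] H :=
    { toFun := fun v => jfun M S (v : H)
      map_add' := by
        rintro ⟨v, hv⟩ ⟨w, hw⟩
        obtain ⟨l, rfl⟩ := hrep _ hv
        obtain ⟨m, rfl⟩ := hrep _ hw
        show jfun M S (fmap M S l + fmap M S m) =
          jfun M S (fmap M S l) + jfun M S (fmap M S m)
        rw [← map_add, jfun_fmap hM hSpair, jfun_fmap hM hSpair, jfun_fmap hM hSpair,
          gmap_add]
      map_smul' := by
        rintro r ⟨v, hv⟩
        obtain ⟨l, rfl⟩ := hrep _ hv
        show jfun M S (r • fmap M S l) = r • jfun M S (fmap M S l)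
        rw [← algebraMap_smul ℂ r (fmap M S l), ← map_smul, jfun_fmap hM hSpair,
          jfun_fmap hM hSpair, gmap_smul]
        have : conj ((algebraMap ℝ ℂ) r) = (algebraMap ℝ ℂ) r := by
          simp [Complex.conj_ofReal]
        rw [this, algebraMap_smul] }
  have hjnorm : ∀ v : Vr, ‖jlin v‖ = ‖v‖ := by
    rintro ⟨v, hv⟩
    obtain ⟨l, rfl⟩ := hrep _ hv
    show ‖jfun M S (fmap M S l)‖ = ‖fmap M S l‖
    rw [jfun_fmap hM hSpair, norm_gmap hM hSpair]
  let jcont : Vr →L[ℝ] H := jlin.mkContinuous 1 (fun v => by rw [hjnorm, one_mul])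
  have hdr : DenseRange (Vr.subtypeL : Vr →L[ℝ] H) := by
    show Dense (Set.range (Subtype.val : Vr → H))
    rw [Subtype.range_coe]
    exact hdenseVr
  have hui : IsUniformInducing (Vr.subtypeL : Vr →L[ℝ] H) :=
    isometry_subtype_coe.isUniformInducing
  let K : H →L[ℝ] H := jcont.extend Vr.subtypeL
  have hKf : ∀ l : Idx M S →₀ ℂ, K (fmap M S l) = gmap M S l := by
    intro l
    have h := ContinuousLinearMap.extend_eq jcont hdr hui
      ⟨fmap M S l, ⟨l, rfl⟩⟩
    have h2 : jcont ⟨fmap M S l, ⟨l, rfl⟩⟩ = jfun M S (fmap M S l) := rfl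
    rw [h2, jfun_fmap hM hSpair] at h
    exact h
  -- closure arguments
  have hEq : ∀ v ∈ (R : Set H), ∃ l, fmap M S l = v := fun v hv => hv
  have Kisom : ∀ x : H, ‖K x‖ = ‖x‖ := by
    have := Continuous.ext_on hdense (continuous_norm.comp K.continuous) continuous_norm
      (fun v hv => by
        obtain ⟨l, rfl⟩ := hEq v hv
        show ‖K (fmap M S l)‖ = ‖fmap M S l‖
        rw [hKf, norm_gmap hM hSpair])
    exact fun x => congrFun this x
  have Kconj : ∀ (c : ℂ) (x : H), K (c • x) = conj c • K x := by
    intro c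
    have := Continuous.ext_on hdense (K.continuous.comp (continuous_const_smul c))
      ((continuous_const_smul (conj c)).comp K.continuous)
      (fun v hv => by
        obtain ⟨l, rfl⟩ := hEq v hv
        show K (c • fmap M S l) = conj c • K (fmap M S l)
        rw [← map_smul, hKf, hKf, gmap_smul])
    exact fun x => congrFun this x
  have Kinvol : ∀ x : H, K (K x) = x := by
    have := Continuous.ext_on hdense (K.continuous.comp K.continuous) continuous_id
      (fun v hv => by
        obtain ⟨l, rfl⟩ := hEq v hv
        show K (K (fmap M S l)) = fmap M S l
        rw [hKf]
        have : gmap M S l = fmap M S (conjD l) := rfl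
        rw [this, hKf, gmap_conjD])
    exact fun x => congrFun this x
  have hKAK : ∀ A ∈ M, ∀ x : H, K (A (K x)) = ContinuousLinearMap.adjoint A x := by
    intro A hA
    have := Continuous.ext_on hdense
      (K.continuous.comp (A.continuous.comp K.continuous))
      (ContinuousLinearMap.adjoint A).continuous
      (fun v hv => by
        obtain ⟨l, rfl⟩ := hEq v hv
        show K (A (K (fmap M S l))) = ContinuousLinearMap.adjoint A (fmap M S l)
        rw [hKf]
        have h1 : gmap M S l = fmap M S (conjD l) := rfl
        rw [h1, ← fmap_tau A hA, hKf, gmap_tau hM A hA, gmap_conjD,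
          ContinuousLinearMap.star_eq_adjoint])
    exact fun x => congrFun this x
  -- assemble the antiunitary
  let Jequiv : H ≃ₛₗ[starRingEnd ℂ] H :=
    { toFun := K
      map_add' := fun x y => map_add K x y
      map_smul' := fun c x => Kconj c x
      invFun := K
      left_inv := Kinvol
      right_inv := Kinvol }
  refine ⟨⟨Jequiv, fun x => Kisom x⟩, fun A hA x => ?_⟩
  exact hKAK A hA x
end
end

section
/- Let M be a commutative von Neumann algebra on a complex Hilbert space H, let M' denote its commutant, and let (H_i)_{i∈I} be a family of pairwise orthogonal closed subspaces of H whose algebraic span is dense in H, such that each H_i is invariant under every operator in M' and such that, for each i, the only closed subspaces of H_i invariant under all operators of M' are {0} and H_i. Then for an antiunitary operator J on H the following are equivalent: (a) J commutes with every selfadjoint element of M; (b) J(H_i) ⊆ H_i for every i ∈ I. -/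
set_option synthInstance.maxHeartbeats 400000
set_option maxHeartbeats 2000000

section Aux

variable {E : Type*} [NormedAddCommGroup E] [InnerProductSpace ℂ E]

/-- Restriction of a continuous linear map to an invariant submodule. -/
noncomputable def restrictCLM (U : Submodule ℂ E) (T : E →L[ℂ] E)
    (hT : ∀ x ∈ U, T x ∈ U) : U →L[ℂ] U where
  toLinearMap := (T : E →ₗ[ℂ] E).restrict hT
  cont := Continuous.subtype_mk (T.continuous.comp continuous_subtype_val) _

@[simp] lemma restrictCLM_apply (U : Submodule ℂ E) (T : E →L[ℂ] E)
    (hT : ∀ x ∈ U, T x ∈ U) (v : U) : (restrictCLM U T hT v : E) = T v := rfl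

lemma restrictCLM_comm (U : Submodule ℂ E) (T S : E →L[ℂ] E)
    (hT : ∀ x ∈ U, T x ∈ U) (hS : ∀ x ∈ U, S x ∈ U) (h : T * S = S * T) :
    restrictCLM U T hT * restrictCLM U S hS = restrictCLM U S hS * restrictCLM U T hT := by
  ext v
  have := congrArg (fun f : E →L[ℂ] E => f (v : E)) h
  simpa [ContinuousLinearMap.mul_apply] using this

/-- An element commuting with a selfadjoint element commutes with any continuous
function of it. -/
lemma commute_cfc_of_commute {A : Type*} [CStarAlgebra A] {B T : A} (hB : IsSelfAdjoint B)
    (h : T * B = B * T) (f : ℝ → ℝ) : T * cfc f B = cfc f B * T := by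
  by_cases hf : ContinuousOn f (spectrum ℝ B)
  · rw [cfc_apply f B hB hf]
    suffices hg : ∀ g : C(spectrum ℝ B, ℝ), T * cfcHom hB g = cfcHom hB g * T from hg _
    intro g
    induction g using ContinuousMap.induction_on_of_compact with
    | const r =>
        have h1 : (ContinuousMap.const (spectrum ℝ B) r)
            = algebraMap ℝ C(spectrum ℝ B, ℝ) r := rfl
        rw [h1, AlgHomClass.commutes]
        exact (Algebra.commutes r T).symm
    | id => rw [cfcHom_id hB]; exact h
    | star_id => rw [star_trivial, cfcHom_id hB]; exact h
    | add f g hf hg => rw [map_add, mul_add, add_mul, hf, hg]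
    | mul f g hf hg =>
        rw [map_mul, ← mul_assoc, hf, mul_assoc, hg, mul_assoc]
    | frequently f hf =>
        have hcl : IsClosed {g : C(spectrum ℝ B, ℝ) | T * cfcHom hB g = cfcHom hB g * T} := by
          have hc : Continuous (fun g : C(spectrum ℝ B, ℝ) => cfcHom hB g) :=
            (cfcHom_isClosedEmbedding hB).continuous
          exact isClosed_eq (continuous_const.mul hc) (hc.mul continuous_const)
        exact hcl.closure_subset (hf.mem_closure)
  · rw [cfc_apply_of_not_continuousOn B hf]
    simp

end Aux

/-- Let `M` be a commutative von Neumann algebra on a complex Hilbert space `H` with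
commutant `M'` (operators commuting with every element of `M`), and let `(V i)_{i ∈ ι}`
be a family of pairwise orthogonal closed subspaces of `H` with dense algebraic span,
each invariant under every operator of `M'` and irreducible for `M'` (the only closed
`M'`-invariant subspaces of `V i` are `⊥` and `V i`). Then an antiunitary operator `J`
on `H` commutes with every selfadjoint element of `M` if and only if `J (V i) ⊆ V i`
for every `i`. -/
theorem antiunitary_commutes_selfAdjoint_iff_preserves_irreducibles
    {H : Type*} [NormedAddCommGroup H] [InnerProductSpace ℂ H] [CompleteSpace H]
    (M : VonNeumannAlgebra H) (hM : ∀ A ∈ M, ∀ B ∈ M, A * B = B * A)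
    {ι : Type*} (V : ι → Submodule ℂ H)
    (hVclosed : ∀ i, IsClosed (V i : Set H))
    (hVorth : ∀ i j, i ≠ j → ∀ x ∈ V i, ∀ y ∈ V j, (inner ℂ x y : ℂ) = 0)
    (hVdense : Dense ((⨆ i, V i : Submodule ℂ H) : Set H))
    (hVinv : ∀ T : H →L[ℂ] H, (∀ A ∈ M, T * A = A * T) → ∀ i, ∀ x ∈ V i, T x ∈ V i)
    (hVirr : ∀ i, ∀ K : Submodule ℂ H, IsClosed (K : Set H) → K ≤ V i →
      (∀ T : H →L[ℂ] H, (∀ A ∈ M, T * A = A * T) → ∀ x ∈ K, T x ∈ K) →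
      K = ⊥ ∨ K = V i)
    (J : H ≃ₗᵢ⋆[ℂ] H) :
    (∀ A ∈ M, IsSelfAdjoint A → ∀ x : H, J (A x) = A (J x)) ↔
    (∀ i, ∀ x ∈ V i, J x ∈ V i) := by
  constructor
  · -- (a) → (b): use the orthogonal projection onto V i, which lies in M and is selfadjoint
    intro hJ i x hx
    haveI : CompleteSpace (V i) := (hVclosed i).completeSpace_coe
    set P : H →L[ℂ] H := (V i).subtypeL.comp ((V i).orthogonalProjectionOnto) with hP
    have hPsa : IsSelfAdjoint P := isSelfAdjoint_starProjection (V i)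
    have hPfix : ∀ y ∈ V i, P y = y := by
      intro y hy
      exact Submodule.starProjection_eq_self_iff.mpr hy
    have hPmem : P ∈ M := by
      have : P ∈ Set.centralizer (Set.centralizer (M : Set (H →L[ℂ] H))) := by
        intro T hT
        -- T commutes with every element of M
        have hTc : ∀ A ∈ M, T * A = A * T := fun A hA => (hT A hA).symm
        have hTstarc : ∀ A ∈ M, (star T) * A = A * (star T) := by
          intro A hA
          have h1 : T * star A = star A * T := hTc (star A) (star_mem hA)
          calc star T * A = star (star A * T) := by simp [star_mul]
            _ = star (T * star A) := by rw [h1]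
            _ = A * star T := by simp [star_mul]
        have hTinv : ∀ y ∈ V i, T y ∈ V i := hVinv T hTc i
        have hTstarinv : ∀ y ∈ V i, (star T) y ∈ V i := hVinv (star T) hTstarc i
        -- show T * P = P * T
        ext y
        have hdecomp : y = P y + (y - P y) := by abel
        have h1 : T (P y) ∈ V i := hTinv _ (by simp [hP])
        have h2 : y - P y ∈ (V i)ᗮ := by
          simpa [hP] using Submodule.sub_starProjection_mem_orthogonal (K := V i) y
        have h3 : T (y - P y) ∈ (V i)ᗮ := by
          intro u hu
          have : inner ℂ ((star T) u) (y - P y) = (0 : ℂ) := h2 _ (hTstarinv u hu)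
          calc (inner ℂ u (T (y - P y)) : ℂ)
              = inner ℂ ((ContinuousLinearMap.adjoint T) u) (y - P y) := by
                rw [ContinuousLinearMap.adjoint_inner_left]
            _ = 0 := by rwa [← ContinuousLinearMap.star_eq_adjoint]
        calc (T * P) y = T (P y) := rfl
          _ = P (T (P y)) + P (T (y - P y)) := by
              rw [hPfix _ h1]
              have h4 : P (T (y - P y)) = 0 := by
                show (V i).subtypeL (((V i).orthogonalProjectionOnto) (T (y - P y))) = 0
                rw [Submodule.orthogonalProjectionOnto_apply_of_mem_orthogonal h3]
                simp
              rw [h4, add_zero]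
          _ = P (T (P y) + T (y - P y)) := by rw [map_add]
          _ = P (T y) := by rw [← map_add, ← hdecomp]
          _ = (P * T) y := rfl
      rwa [M.centralizer_centralizer] at this
    have := hJ P hPmem hPsa x
    rw [hPfix x hx] at this
    rw [this]
    simp [hP]
  · -- (b) → (a): selfadjoint elements of M act as real scalars on each V i
    intro hJV A hA hAsa x
    -- Scalar action claim
    have key : ∀ i, ∃ c : ℝ, ∀ y ∈ V i, A y = (c : ℂ) • y := by
      intro i
      have hAcomm : ∀ B ∈ M, A * B = B * A := hM A hA
      have hAinv : ∀ y ∈ V i, A y ∈ V i := hVinv A hAcomm i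
      haveI : CompleteSpace (V i) := (hVclosed i).completeSpace_coe
      haveI := IsStarNormal.instContinuousFunctionalCalculus (A := V i →L[ℂ] V i)
      haveI := IsSelfAdjoint.instContinuousFunctionalCalculus (A := V i →L[ℂ] V i)
      set B : V i →L[ℂ] V i := restrictCLM (V i) A hAinv with hB
      have hBsa : IsSelfAdjoint B := by
        rw [ContinuousLinearMap.isSelfAdjoint_iff_isSymmetric]
        intro v w
        have := (ContinuousLinearMap.isSelfAdjoint_iff_isSymmetric.mp hAsa) (v : H) (w : H)
        simpa [Submodule.coe_inner, hB] using this
      -- spectrum dichotomy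
      by_cases htwo : ∃ a ∈ spectrum ℝ B, ∃ b ∈ spectrum ℝ B, a ≠ b
      · exfalso
        obtain ⟨a, ha, b, hb, hab⟩ := htwo
        set r : ℝ := |a - b| / 2 with hr
        have hrpos : 0 < r := by
          have : a - b ≠ 0 := sub_ne_zero.mpr hab
          positivity
        set f : ℝ → ℝ := fun t => max (r - |t - a|) 0 with hf
        set g : ℝ → ℝ := fun t => max (r - |t - b|) 0 with hg
        have hfc : Continuous f := by fun_prop
        have hgc : Continuous g := by fun_prop
        have hfg : ∀ t, f t * g t = 0 := by
          intro t
          rcases le_or_gt r |t - a| with h1 | h1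
          · have : f t = 0 := by simp [hf, max_eq_right, sub_nonpos.mpr h1]
            rw [this, zero_mul]
          · have h2 : r ≤ |t - b| := by
              have habs : |a - b| ≤ |a - t| + |t - b| := abs_sub_le a t b
              have : |a - t| = |t - a| := abs_sub_comm a t
              rw [this] at habs
              have : |a - b| = 2 * r := by rw [hr]; ring
              linarith
            have : g t = 0 := by simp [hg, max_eq_right, sub_nonpos.mpr h2]
            rw [this, mul_zero]
        set F : V i →L[ℂ] V i := cfc f B with hF
        set G : V i →L[ℂ] V i := cfc g B with hG
        have hFG : F * G = 0 := by
          rw [hF, hG, ← cfc_mul f g B (hfc.continuousOn) (hgc.continuousOn)]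
          have : (fun t => f t * g t) = fun _ : ℝ => (0 : ℝ) := funext hfg
          rw [this, cfc_const_zero]
        have hGF : G * F = 0 := by
          rw [hF, hG, ← cfc_mul g f B (hgc.continuousOn) (hfc.continuousOn)]
          have : (fun t => g t * f t) = fun _ : ℝ => (0 : ℝ) := by
            funext t; rw [mul_comm]; exact hfg t
          rw [this, cfc_const_zero]
        -- nonvanishing
        have hcfc_ne : ∀ (h : ℝ → ℝ), Continuous h → ∀ c ∈ spectrum ℝ B, h c ≠ 0 →
            cfc h B ≠ 0 := by
          intro h hc c hcs hc0 h0
          rw [cfc_apply h B hBsa hc.continuousOn] at h0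
          have hinj := cfcHom_injective (R := ℝ) hBsa
          have : (⟨_, hc.continuousOn.restrict⟩ : C(spectrum ℝ B, ℝ))
              = (0 : C(spectrum ℝ B, ℝ)) := by
            apply hinj
            rw [h0, map_zero]
          have := congrArg (fun k : C(spectrum ℝ B, ℝ) => k ⟨c, hcs⟩) this
          exact hc0 (by simpa using this)
        have hF0 : F ≠ 0 := by
          rw [hF]
          apply hcfc_ne f hfc a ha
          have : f a = r := by simp [hf, le_of_lt hrpos]
          rw [this]; exact ne_of_gt hrpos
        have hG0 : G ≠ 0 := by
          rw [hG]
          apply hcfc_ne g hgc b hb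
          have : g b = r := by simp [hg, le_of_lt hrpos]
          rw [this]; exact ne_of_gt hrpos
        -- the invariant subspace
        set Kv : Submodule ℂ (V i) := (LinearMap.range (F : V i →ₗ[ℂ] V i)).topologicalClosure with hKv
        set K : Submodule ℂ H := Kv.map (V i).subtype with hK
        have hKle : K ≤ V i := by
          rintro y ⟨v, hv, rfl⟩
          exact v.2
        have hKclosed : IsClosed (K : Set H) := by
          have h1 : IsClosed (Kv : Set (V i)) := Submodule.isClosed_topologicalClosure _
          have h2 : (K : Set H) = ((V i).subtype) '' (Kv : Set (V i)) := by
            ext y; simp [hK]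
          rw [h2]
          exact ((hVclosed i).isClosedEmbedding_subtypeVal.isClosedMap) _ h1
        have hKinv : ∀ T : H →L[ℂ] H, (∀ A' ∈ M, T * A' = A' * T) → ∀ y ∈ K, T y ∈ K := by
          intro T hTc y hy
          obtain ⟨v, hv, rfl⟩ := hy
          have hTinv : ∀ z ∈ V i, T z ∈ V i := hVinv T hTc i
          set T' : V i →L[ℂ] V i := restrictCLM (V i) T hTinv with hT'
          have hT'B : T' * B = B * T' :=
            restrictCLM_comm (V i) T A hTinv hAinv (hTc A hA)
          have hT'F : T' * F = F * T' := by
            rw [hF]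
            exact commute_cfc_of_commute (B := B) (T := T') hBsa hT'B f
          -- T' maps Kv into Kv
          have hmapsto : Set.MapsTo T' (LinearMap.range (F : V i →ₗ[ℂ] V i) : Set (V i))
              (LinearMap.range (F : V i →ₗ[ℂ] V i) : Set (V i)) := by
            rintro _ ⟨w, rfl⟩
            refine ⟨T' w, ?_⟩
            have := congrArg (fun S : V i →L[ℂ] V i => S w) hT'F
            simpa [ContinuousLinearMap.mul_apply] using this.symm
          have hvK : T' v ∈ Kv := by
            have := hmapsto.closure T'.continuous
            have h3 : v ∈ closure (LinearMap.range (F : V i →ₗ[ℂ] V i) : Set (V i)) := hv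
            have := this h3
            exact this
          exact ⟨T' v, hvK, rfl⟩
        rcases hVirr i K hKclosed hKle hKinv with h0 | htop
        · -- K = ⊥ ⇒ F = 0
          apply hF0
          ext v
          have hrange : F v ∈ Kv := Submodule.le_topologicalClosure _ ⟨v, rfl⟩
          have : ((F v : V i) : H) ∈ K := ⟨F v, hrange, rfl⟩
          rw [h0] at this
          simp only [Submodule.mem_bot] at this
          simpa using this
        · -- K = V i ⇒ G = 0
          apply hG0
          ext v
          have hvK : ((v : V i) : H) ∈ K := by rw [htop]; exact v.2
          obtain ⟨w, hw, hwv⟩ := hvK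
          have hwv' : w = v := Subtype.ext hwv
          subst hwv'
          -- G vanishes on Kv
          have hGzero : ∀ u ∈ (LinearMap.range (F : V i →ₗ[ℂ] V i) : Set (V i)), G u = 0 := by
            rintro _ ⟨z, rfl⟩
            have := congrArg (fun S : V i →L[ℂ] V i => S z) hGF
            simpa [ContinuousLinearMap.mul_apply] using this
          have hclosed : IsClosed {u : V i | G u = 0} :=
            isClosed_eq G.continuous continuous_const
          have hsub : closure (LinearMap.range (F : V i →ₗ[ℂ] V i) : Set (V i)) ⊆ {u : V i | G u = 0} :=
            hclosed.closure_subset_iff.mpr hGzero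
          have : G w = 0 := hsub hw
          simpa using this
      · -- spectrum is a subsingleton: B is a real scalar
        push_neg at htwo
        rcases (spectrum ℝ B).eq_empty_or_nonempty with hemp | ⟨a, haB⟩
        · refine ⟨0, fun y hy => ?_⟩
          have hB0 : B = 0 := by
            have h1 : B = cfc (id : ℝ → ℝ) B := (cfc_id ℝ B hBsa).symm
            have h2 : cfc (id : ℝ → ℝ) B = cfc (fun _ : ℝ => (0 : ℝ)) B := by
              apply cfc_congr
              intro t ht
              rw [hemp] at ht
              exact absurd ht (Set.notMem_empty t)
            rw [h1, h2, cfc_const_zero]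
          have := congrArg (fun S : V i →L[ℂ] V i => (S ⟨y, hy⟩ : H)) hB0
          simpa [hB] using this
        · refine ⟨a, fun y hy => ?_⟩
          have hBa : B = algebraMap ℝ (V i →L[ℂ] V i) a := by
            have h1 : B = cfc (id : ℝ → ℝ) B := (cfc_id ℝ B hBsa).symm
            have h2 : cfc (id : ℝ → ℝ) B = cfc (fun _ : ℝ => a) B := by
              apply cfc_congr
              intro t ht
              exact htwo t ht a haB
            rw [h1, h2, cfc_const a B hBsa]
          have := congrArg (fun S : V i →L[ℂ] V i => (S ⟨y, hy⟩ : H)) hBa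
          simp only [hB, restrictCLM_apply] at this
          rw [this, Algebra.algebraMap_eq_smul_one, ContinuousLinearMap.smul_apply,
            ContinuousLinearMap.one_apply, ← Complex.coe_smul]
          rfl
    -- conclude by density
    have heq : ∀ y ∈ (⨆ i, V i : Submodule ℂ H), J (A y) = A (J y) := by
      intro y hy
      refine Submodule.iSup_induction (motive := fun z => J (A z) = A (J z)) V hy ?_ ?_ ?_
      · intro j z hz
        obtain ⟨c, hc⟩ := key j
        rw [hc z hz, hc (J z) (hJV j z hz), LinearIsometryEquiv.map_smulₛₗ]
        simp [Complex.conj_ofReal]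
      · simp
      · intro u w hu hw
        simp only [map_add, hu, hw]
    have hfun : (fun y => J (A y)) = fun y => A (J y) := by
      apply Continuous.ext_on hVdense
      · exact J.continuous.comp A.continuous
      · exact A.continuous.comp J.continuous
      · intro y hy
        exact heq y hy
    exact congrFun hfun x
end

section
/- Let H be a group, σ : H → H a group automorphism, V a complex Hilbert space, and ρ : H → B(V) a unitary representation. Let ψ be an antiunitary operator on V satisfying ρ(σ(h)) ∘ ψ = ψ ∘ ρ(h) for all h ∈ H. Let K¹ ⊆ H be a subgroup with σ(K¹) = K¹ such that: (i) the commutant ρ(K¹)' = {T ∈ B(V) : Tρ(k) = ρ(k)T for all k ∈ K¹} is commutative; (ii) there is a family (V_i)_{i∈I} of pairwise orthogonal closed subspaces of V with dense algebraic span, each invariant under ρ(k) for all k ∈ K¹, and such that for each i the only closed subspaces of V_i invariant under all ρ(k), k ∈ K¹, are {0} and V_i; (iii) for each i ∈ I there is an antiunitary operator ψ_i on V_i satisfying ρ(σ(k))|_{V_i} ∘ ψ_i = ψ_i ∘ ρ(k)|_{V_i} for all k ∈ K¹. Then ψ commutes with every selfadjoint element of ρ(K¹)'. -/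
open Polynomial in
/-- If `b` commutes with a selfadjoint `a`, it commutes with `cfc f a`. -/
lemma my_commute_cfc {𝒜 : Type*} [NormedRing 𝒜] [StarRing 𝒜] [NormedAlgebra ℝ 𝒜]
    [ContinuousFunctionalCalculus ℝ 𝒜 (IsSelfAdjoint : 𝒜 → Prop)]
    [CompleteSpace 𝒜]
    {a b : 𝒜} (ha : IsSelfAdjoint a) (hab : Commute a b) (f : ℝ → ℝ) (hf : Continuous f) :
    Commute (cfc f a) b := by
  rw [cfc_apply f a ha (hf.continuousOn)]
  set s : Set ℝ := spectrum ℝ a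
  have key : ∀ g : C(s, ℝ), Commute (cfcHom ha g) b := by
    intro g
    have hXcm : cfcHom ha ((toContinuousMapOnAlgHom s) X) = a := by
      have := cfc_id ℝ a ha
      rw [cfc_apply (id : ℝ → ℝ) a ha continuous_id.continuousOn] at this
      convert this using 2
      ext x
      simp
    have hpoly : ∀ g' ∈ polynomialFunctions s, Commute (cfcHom ha g') b := by
      intro g' hg'
      rw [polynomialFunctions.eq_adjoin_X] at hg'
      have hle : Algebra.adjoin ℝ {(toContinuousMapOnAlgHom s) X} ≤
          (Algebra.adjoin ℝ {a}).comap ((cfcHom ha).toAlgHom : C(s,ℝ) →ₐ[ℝ] 𝒜) := by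
        apply Algebra.adjoin_le
        intro x hx
        rw [Set.mem_singleton_iff] at hx
        subst hx
        show cfcHom ha ((toContinuousMapOnAlgHom s) X) ∈ Algebra.adjoin ℝ {a}
        rw [hXcm]
        exact Algebra.self_mem_adjoin_singleton ℝ a
      have : cfcHom ha g' ∈ Algebra.adjoin ℝ {a} := hle hg'
      exact (Algebra.commute_of_mem_adjoin_singleton_of_commute this hab.symm).symm
    have hclosed : IsClosed {g' : C(s, ℝ) | Commute (cfcHom ha g') b} := by
      have hc : Continuous (cfcHom (R := ℝ) ha) := cfcHom_continuous ha
      exact isClosed_eq ((hc.mul continuous_const)) ((continuous_const.mul hc))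
    have hdense : closure ((polynomialFunctions s : Set C(s, ℝ))) = Set.univ := by
      have := polynomialFunctions.topologicalClosure s
      rw [← Subalgebra.topologicalClosure_coe, this]
      rfl
    have : g ∈ closure ((polynomialFunctions s : Set C(s, ℝ))) := by
      rw [hdense]; trivial
    exact closure_minimal (fun g' hg' => hpoly g' hg') hclosed this
  exact key _

/-- Schur-type lemma: a selfadjoint operator on a nontrivial complex Hilbert space which
commutes with a family `r`, such that the "commutant" of `r` has no zero divisors in the
sense of `hop`, is a real scalar. -/
lemma my_schur {E : Type*} [NormedAddCommGroup E] [InnerProductSpace ℂ E] [CompleteSpace E]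
    [Nontrivial E]
    (A : E →L[ℂ] E) (hA : IsSelfAdjoint A)
    {κ : Type*} (r : κ → E →L[ℂ] E) (hr : ∀ k, Commute A (r k))
    (hop : ∀ F G : E →L[ℂ] E, (∀ k, Commute F (r k)) → (∀ k, Commute G (r k)) →
      F * G = 0 → F ≠ 0 → G = 0) :
    ∃ lam : ℝ, A = algebraMap ℝ (E →L[ℂ] E) lam := by
  haveI : Nontrivial (E →L[ℂ] E) := ⟨1, 0, by
    intro h
    obtain ⟨x, hx⟩ := exists_ne (0 : E)
    apply hx
    calc x = (1 : E →L[ℂ] E) x := rfl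
      _ = (0 : E →L[ℂ] E) x := by rw [h]
      _ = 0 := rfl⟩
  have hne : (spectrum ℝ A).Nonempty := ContinuousFunctionalCalculus.spectrum_nonempty A hA
  have hsub : (spectrum ℝ A).Subsingleton := by
    by_contra hns
    rw [Set.not_subsingleton_iff] at hns
    obtain ⟨a, ha, b, hb, hab⟩ := hns
    set d : ℝ := |a - b| / 2 with hd
    have hdpos : 0 < d := by
      have : a - b ≠ 0 := sub_ne_zero.mpr hab
      positivity
    set f : ℝ → ℝ := fun t => max 0 (d - |t - a|) with hf
    set g : ℝ → ℝ := fun t => max 0 (d - |t - b|) with hg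
    have hfc : Continuous f := continuous_const.max
      (continuous_const.sub ((continuous_id.sub continuous_const).abs))
    have hgc : Continuous g := continuous_const.max
      (continuous_const.sub ((continuous_id.sub continuous_const).abs))
    have hfg : ∀ t, f t * g t = 0 := by
      intro t
      rcases le_or_gt d (|t - a|) with h | h
      · have : f t = 0 := max_eq_left (by linarith)
        rw [this, zero_mul]
      · have hub : d ≤ |t - b| := by
          have h2 : |a - b| ≤ |t - a| + |t - b| := by
            calc |a - b| = |(t - b) - (t - a)| := by ring_nf
              _ ≤ |t - b| + |t - a| := abs_sub _ _
              _ = |t - a| + |t - b| := by ring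
          have : |a - b| = 2 * d := by rw [hd]; field_simp
          linarith
        have : g t = 0 := max_eq_left (by linarith)
        rw [this, mul_zero]
    set F := cfc f A with hF
    set G := cfc g A with hG
    have hFr : ∀ k, Commute F (r k) := fun k => my_commute_cfc hA (hr k) f hfc
    have hGr : ∀ k, Commute G (r k) := fun k => my_commute_cfc hA (hr k) g hgc
    have hFG : F * G = 0 := by
      rw [hF, hG, ← cfc_mul f g A hfc.continuousOn hgc.continuousOn]
      have : (fun t => f t * g t) = fun _ : ℝ => (0 : ℝ) := funext hfg
      rw [this]
      simp [cfc_const (0:ℝ) A hA]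
    have hFne : F ≠ 0 := by
      intro h0
      have hmap := cfc_map_spectrum f A hA hfc.continuousOn
      rw [← hF, h0] at hmap
      have : f a ∈ spectrum ℝ (0 : E →L[ℂ] E) := hmap ▸ Set.mem_image_of_mem f ha
      rw [spectrum.zero_eq] at this
      have hfa : f a = d := by simp [hf, le_of_lt hdpos]
      rw [hfa] at this
      exact hdpos.ne' (Set.mem_singleton_iff.mp this)
    have hGne : G ≠ 0 := by
      intro h0
      have hmap := cfc_map_spectrum g A hA hgc.continuousOn
      rw [← hG, h0] at hmap
      have : g b ∈ spectrum ℝ (0 : E →L[ℂ] E) := hmap ▸ Set.mem_image_of_mem g hb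
      rw [spectrum.zero_eq] at this
      have hgb : g b = d := by simp [hg, le_of_lt hdpos]
      rw [hgb] at this
      exact hdpos.ne' (Set.mem_singleton_iff.mp this)
    exact hGne (hop F G hFr hGr hFG hFne)
  obtain ⟨lam, hlam⟩ := hne
  have hspec : spectrum ℝ A = {lam} := hsub.eq_singleton_of_mem hlam
  refine ⟨lam, ?_⟩
  have h1 : A = cfc (id : ℝ → ℝ) A := (cfc_id ℝ A hA).symm
  have h2 : cfc (id : ℝ → ℝ) A = cfc (fun _ : ℝ => lam) A := by
    apply cfc_congr
    intro x hx
    rw [hspec] at hx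
    simpa using hx
  rw [h1, h2, cfc_const lam A hA]


/-- Let `ρ : H → B(V)` be a unitary representation of a group `H` on a complex Hilbert
space `V`, `σ` an automorphism of `H`, and `ψ` an antiunitary operator on `V` with
`ρ(σ h) ∘ ψ = ψ ∘ ρ h` for all `h`. Let `K ≤ H` be a `σ`-invariant subgroup such that:
(i) the commutant of `ρ(K)` is commutative; (ii) there is a family `(W i)` of pairwise
orthogonal closed subspaces with dense algebraic span, each `ρ(K)`-invariant and
`ρ(K)`-irreducible; (iii) each `W i` carries an antiunitary `ψᵢ` intertwining
`ρ k |_{W i}` with `ρ (σ k) |_{W i}`. Then `ψ` commutes with every selfadjoint element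
of the commutant `ρ(K)'`. -/
theorem antiunitary_commutes_commutant_selfAdjoint_of_discrete_decomposition
    {H : Type*} [Group H] {V : Type*} [NormedAddCommGroup V] [InnerProductSpace ℂ V]
    [CompleteSpace V]
    (σ : H ≃* H)
    (ρ : H →* (V →L[ℂ] V)) (hρ : ∀ h, ρ h ∈ unitary (V →L[ℂ] V))
    (ψ : V ≃ₗᵢ⋆[ℂ] V) (hψ : ∀ (h : H) (x : V), ρ (σ h) (ψ x) = ψ (ρ h x))
    (K : Subgroup H) (hK : Subgroup.map σ.toMonoidHom K = K)
    (hcomm : ∀ T S : V →L[ℂ] V, (∀ k ∈ K, T * ρ k = ρ k * T) →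
      (∀ k ∈ K, S * ρ k = ρ k * S) → T * S = S * T)
    {ι : Type*} (W : ι → Submodule ℂ V)
    (hWclosed : ∀ i, IsClosed (W i : Set V))
    (hWorth : ∀ i j, i ≠ j → ∀ x ∈ W i, ∀ y ∈ W j, (inner ℂ x y : ℂ) = 0)
    (hWdense : Dense ((⨆ i, W i : Submodule ℂ V) : Set V))
    (hWinv : ∀ i, ∀ k ∈ K, ∀ x ∈ W i, ρ k x ∈ W i)
    (hWirr : ∀ i, ∀ L : Submodule ℂ V, IsClosed (L : Set V) → L ≤ W i →
      (∀ k ∈ K, ∀ x ∈ L, ρ k x ∈ L) → L = ⊥ ∨ L = W i)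
    (ψi : ∀ i, (W i) ≃ₗᵢ⋆[ℂ] (W i))
    (hψi : ∀ i, ∀ k ∈ K, ∀ x y : W i, (y : V) = ρ k (x : V) →
      ((ψi i y : W i) : V) = ρ (σ k) ((ψi i x : W i) : V)) :
    ∀ T : V →L[ℂ] V, (∀ k ∈ K, T * ρ k = ρ k * T) → IsSelfAdjoint T →
      ∀ x : V, ψ (T x) = T (ψ x) := by
  intro T hT hsa
  -- unitarity facts
  have hstar : ∀ k : H, star (ρ k) = ρ k⁻¹ := by
    intro k
    have h1 : star (ρ k) * ρ k = 1 := (hρ k).1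
    have h2 : ρ k * ρ k⁻¹ = 1 := by rw [← map_mul, mul_inv_cancel, map_one]
    calc star (ρ k) = star (ρ k) * (ρ k * ρ k⁻¹) := by rw [h2, mul_one]
      _ = ρ k⁻¹ := by rw [← mul_assoc, h1, one_mul]
  have hadj : ∀ (k : H) (x y : V), (inner ℂ x (ρ k y) : ℂ) = inner ℂ (ρ k⁻¹ x) y := by
    intro k x y
    rw [← hstar k, ContinuousLinearMap.star_eq_adjoint, ContinuousLinearMap.adjoint_inner_left]
  -- the key statement on each W i
  have hmain : ∀ i, ∀ x ∈ W i, ψ (T x) = T (ψ x) := by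
    intro i
    haveI : CompleteSpace (W i) := (hWclosed i).completeSpace_coe
    by_cases hbot : W i = ⊥
    · intro x hx
      rw [hbot, Submodule.mem_bot] at hx
      subst hx
      simp
    haveI : Nontrivial (W i) := Submodule.nontrivial_iff_ne_bot.mpr hbot
    set P : V →L[ℂ] (W i) := (W i).orthogonalProjectionOnto with hPdef
    set J : (W i) →L[ℂ] V := (W i).subtypeL with hJdef
    -- the projection commutes with ρ k for k ∈ K
    have hProj : ∀ k ∈ K, ∀ v : V, (P (ρ k v) : V) = ρ k (P v : V) := by
      intro k hk v
      have hmem : ρ k (P v : V) ∈ W i := hWinv i k hk _ (P v).2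
      have horth : ρ k v - ρ k (P v : V) ∈ (W i)ᗮ := by
        rw [← map_sub, Submodule.mem_orthogonal]
        intro u hu
        rw [hadj]
        exact (Submodule.mem_orthogonal _ _).mp
          (Submodule.sub_starProjection_mem_orthogonal (K := W i) v) _ (hWinv i k⁻¹ (K.inv_mem hk) u hu)
      exact Submodule.eq_starProjection_of_mem_orthogonal hmem horth
    -- T preserves W i
    have hPc : ∀ k ∈ K, (J ∘L P) * ρ k = ρ k * (J ∘L P) := by
      intro k hk
      ext v
      exact hProj k hk v
    have hTW : ∀ v, v ∈ W i → T v ∈ W i := by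
      intro v hv
      have h1 : T * (J ∘L P) = (J ∘L P) * T := hcomm T (J ∘L P) hT hPc
      have h2 : (J ∘L P) v = v := by
        show (P v : V) = v
        exact Submodule.starProjection_eq_self_iff.mpr hv
      have h3 : T v = (P (T v) : V) := by
        conv_lhs => rw [← h2]
        calc T ((J ∘L P) v) = (T * (J ∘L P)) v := rfl
          _ = ((J ∘L P) * T) v := by rw [h1]
          _ = (P (T v) : V) := rfl
      rw [h3]
      exact (P (T v)).2
    -- the compression of T to W i
    set A : (W i) →L[ℂ] (W i) := P ∘L (T ∘L J) with hAdef
    have hA : ∀ x : W i, (A x : V) = T x := by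
      intro x
      show (P (T (J x)) : V) = T x
      exact Submodule.starProjection_eq_self_iff.mpr (hTW _ x.2)
    -- the restricted representation
    set R : H → (W i) →L[ℂ] (W i) := fun k => P ∘L ((ρ k) ∘L J) with hRdef
    have hR : ∀ k ∈ K, ∀ x : W i, (R k x : V) = ρ k x := by
      intro k hk x
      show (P (ρ k (J x)) : V) = ρ k x
      exact Submodule.starProjection_eq_self_iff.mpr (hWinv i k hk _ x.2)
    -- A is selfadjoint
    have hAsa : IsSelfAdjoint A := by
      rw [ContinuousLinearMap.isSelfAdjoint_iff_isSymmetric]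
      intro x y
      have hsym : ∀ u v : V, (inner ℂ (T u) v : ℂ) = inner ℂ u (T v) :=
        fun u v => hsa.isSymmetric u v
      calc (inner ℂ (A x) y : ℂ) = inner ℂ ((A x : V)) (y : V) := rfl
        _ = inner ℂ (T (x : V)) (y : V) := by rw [hA]
        _ = inner ℂ (x : V) (T (y : V)) := hsym _ _
        _ = inner ℂ (x : V) ((A y : V)) := by rw [hA]
        _ = inner ℂ x (A y) := rfl
    -- A commutes with the restricted representation
    have hAcomm : ∀ k ∈ K, Commute A (R k) := by
      intro k hk
      have hTk := hT k hk
      show A * R k = R k * A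
      ext x
      show (A (R k x) : V) = (R k (A x) : V)
      rw [hA, hR k hk, hR k hk, hA]
      calc T (ρ k (x : V)) = (T * ρ k) (x : V) := rfl
        _ = (ρ k * T) (x : V) := by rw [hTk]
        _ = ρ k (T (x : V)) := rfl
    -- irreducibility: the commutant of (R k) has no zero divisors
    have hop : ∀ F G : (W i) →L[ℂ] (W i),
        (∀ k : K, Commute F (R k.1)) → (∀ k : K, Commute G (R k.1)) →
        F * G = 0 → F ≠ 0 → G = 0 := by
      intro F G hF hG hFG hFne
      by_contra hGne
      -- the closure of the range of J ∘ G ∘ P, a K-invariant subspace of W i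
      set Φ : V →L[ℂ] V := J ∘L (G ∘L P) with hΦdef
      set L : Submodule ℂ V := (LinearMap.range (Φ : V →ₗ[ℂ] V)).topologicalClosure with hLdef
      have hLclosed : IsClosed (L : Set V) := (LinearMap.range (Φ : V →ₗ[ℂ] V)).isClosed_topologicalClosure
      have hLle : L ≤ W i := by
        apply Submodule.topologicalClosure_minimal
        · rintro v ⟨u, rfl⟩
          exact (G (P u)).2
        · exact hWclosed i
      have hΦcomm : ∀ k ∈ K, ∀ v : V, ρ k (Φ v) = Φ (ρ k v) := by
        intro k hk v
        have h1 : Φ v = (G (P v) : V) := rfl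
        have h2 : ρ k (G (P v) : V) = (R k (G (P v)) : V) := (hR k hk _).symm
        have h3 : R k (G (P v)) = G (R k (P v)) := by
          have := (hG ⟨k, hk⟩).symm
          calc R k (G (P v)) = (R k * G) (P v) := rfl
            _ = (G * R k) (P v) := by rw [this]
            _ = G (R k (P v)) := rfl
        have h4 : R k (P v) = P (ρ k v) := by
          apply Subtype.ext
          rw [hR k hk, hProj k hk]
        rw [h1, h2, h3, h4]
        rfl
      have hLinv : ∀ k ∈ K, ∀ x ∈ L, ρ k x ∈ L := by
        intro k hk x hx
        have hx' : x ∈ closure ((LinearMap.range (Φ : V →ₗ[ℂ] V) : Submodule ℂ V) : Set V) := hx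
        have himg : ρ k x ∈ closure ((ρ k) '' ((LinearMap.range (Φ : V →ₗ[ℂ] V) : Submodule ℂ V) : Set V)) :=
          (image_closure_subset_closure_image (ρ k).continuous) ⟨x, hx', rfl⟩
        refine closure_mono ?_ himg
        rintro _ ⟨u, ⟨w, rfl⟩, rfl⟩
        exact ⟨ρ k w, (hΦcomm k hk w).symm⟩
      rcases hWirr i L hLclosed hLle hLinv with hbot' | htop
      · -- then G = 0
        apply hGne
        ext x
        show (G x : V) = ((0 : (W i) →L[ℂ] (W i)) x : V)
        have : Φ (J x) ∈ L := Submodule.le_topologicalClosure _ ⟨J x, rfl⟩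
        rw [hbot', Submodule.mem_bot] at this
        have hPJ : P (J x) = x := by
          apply Subtype.ext
          exact Submodule.starProjection_eq_self_iff.mpr x.2
        have : (G (P (J x)) : V) = 0 := this
        rw [hPJ] at this
        exact this
      · -- then F kills all of W i, contradiction
        apply hFne
        have hFL : ∀ v ∈ L, (J ∘L (F ∘L P)) v = 0 := by
          intro v hv
          have hcont : Continuous (J ∘L (F ∘L P)) := (J ∘L (F ∘L P)).continuous
          have hzero : ∀ u ∈ ((LinearMap.range (Φ : V →ₗ[ℂ] V) : Submodule ℂ V) : Set V),
              (J ∘L (F ∘L P)) u = 0 := by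
            rintro _ ⟨w, rfl⟩
            have hPΦ : P (Φ w) = G (P w) := by
              apply Subtype.ext
              exact Submodule.starProjection_eq_self_iff.mpr (G (P w)).2
            show (F (P (Φ w)) : V) = 0
            rw [hPΦ]
            have : F (G (P w)) = (F * G) (P w) := rfl
            rw [this, hFG]
            rfl
          have : v ∈ closure ((LinearMap.range (Φ : V →ₗ[ℂ] V) : Submodule ℂ V) : Set V) := hv
          have hmem := this
          -- the zero set is closed
          have hcl : IsClosed {u : V | (J ∘L (F ∘L P)) u = 0} :=
            isClosed_eq hcont continuous_const
          exact closure_minimal hzero hcl hmem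
        ext x
        have hx : (J x : V) ∈ L := by
          rw [htop]
          exact x.2
        have := hFL (J x) hx
        have hPJ : P (J x) = x := by
          apply Subtype.ext
          exact Submodule.starProjection_eq_self_iff.mpr x.2
        show (F x : V) = ((0 : (W i) →L[ℂ] (W i)) x : V)
        calc (F x : V) = (F (P (J x)) : V) := by rw [hPJ]
          _ = (J ∘L (F ∘L P)) (J x) := rfl
          _ = 0 := this
          _ = ((0 : (W i) →L[ℂ] (W i)) x : V) := rfl
    -- Schur: A is a real scalar
    obtain ⟨lam, hlam⟩ := my_schur A hAsa (fun k : K => R k.1)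
      (fun k => hAcomm k.1 k.2) hop
    have hTx : ∀ x ∈ W i, T x = (lam : ℂ) • x := by
      intro x hx
      have h1 : T x = (A ⟨x, hx⟩ : V) := (hA ⟨x, hx⟩).symm
      rw [h1, hlam]
      have h2 : algebraMap ℝ ((W i) →L[ℂ] (W i)) lam ⟨x, hx⟩ = lam • (⟨x, hx⟩ : W i) := by
        rw [Algebra.algebraMap_eq_smul_one]
        rfl
      rw [h2]
      have h3 : ((lam • (⟨x, hx⟩ : W i) : W i) : V) = lam • x := rfl
      rw [h3]
      exact (RCLike.real_smul_eq_coe_smul (K := ℂ) lam x).symm ▸ rfl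
    -- the operator B = ψ ∘ (ψi i)⁻¹ ∘ P lies in the commutant
    set Blin : V →ₗ[ℂ] V :=
      { toFun := fun v => ψ ((((ψi i).symm (P v)) : W i) : V)
        map_add' := by
          intro u v
          show ψ ((((ψi i).symm (P (u + v))) : W i) : V) =
            ψ ((((ψi i).symm (P u)) : W i) : V) + ψ ((((ψi i).symm (P v)) : W i) : V)
          rw [map_add, map_add, Submodule.coe_add, map_add]
        map_smul' := by
          intro c v
          show ψ ((((ψi i).symm (P (c • v))) : W i) : V) =
            c • ψ ((((ψi i).symm (P v)) : W i) : V)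
          rw [map_smul, map_smulₛₗ, Submodule.coe_smul, map_smulₛₗ]
          simp } with hBlin
    have hbound : ∀ v : V, ‖Blin v‖ ≤ 1 * ‖v‖ := by
      intro v
      show ‖ψ ((((ψi i).symm (P v)) : W i) : V)‖ ≤ 1 * ‖v‖
      rw [ψ.norm_map]
      have h1 : ‖((((ψi i).symm (P v)) : W i) : V)‖ = ‖(ψi i).symm (P v)‖ := rfl
      rw [h1, (ψi i).symm.norm_map]
      calc ‖P v‖ ≤ ‖P‖ * ‖v‖ := P.le_opNorm v
        _ ≤ 1 * ‖v‖ := by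
            exact mul_le_mul_of_nonneg_right (Submodule.orthogonalProjectionOnto_norm_le (W i))
              (norm_nonneg v)
    set B : V →L[ℂ] V := Blin.mkContinuous 1 hbound with hBdef
    have hBapp : ∀ v : V, B v = ψ ((((ψi i).symm (P v)) : W i) : V) := fun v => rfl
    have hB : ∀ k ∈ K, B * ρ k = ρ k * B := by
      intro k hk
      obtain ⟨k', hk', hσk'⟩ : ∃ k' ∈ K, σ k' = k := by
        have hmem : k ∈ Subgroup.map σ.toMonoidHom K := hK.symm ▸ hk
        obtain ⟨k', hk', h⟩ := hmem
        exact ⟨k', hk', h⟩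
      ext v
      show B (ρ k v) = ρ k (B v)
      rw [hBapp, hBapp]
      set x : W i := (ψi i).symm (P v) with hx
      set y : W i := R k' x with hy
      have hyx : (y : V) = ρ k' (x : V) := hR k' hk' x
      have h1 : ψi i y = R k (P v) := by
        apply Subtype.ext
        rw [hψi i k' hk' x y hyx, hσk', hR k hk]
        congr 1
        show ((ψi i) ((ψi i).symm (P v)) : V) = (P v : V)
        rw [(ψi i).apply_symm_apply]
      have h2 : P (ρ k v) = R k (P v) := by
        apply Subtype.ext
        rw [hR k hk, hProj k hk]
      have h3 : (ψi i).symm (P (ρ k v)) = y := by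
        rw [h2, ← h1, (ψi i).symm_apply_apply]
      rw [h3]
      calc ψ ((y : V)) = ψ (ρ k' (x : V)) := by rw [hyx]
        _ = ρ (σ k') (ψ (x : V)) := (hψ k' _).symm
        _ = ρ k (ψ (x : V)) := by rw [hσk']
    -- now conclude on W i
    intro x hx
    set xh : W i := ⟨x, hx⟩ with hxh
    have hψx : ψ x = B (J ((ψi i) xh)) := by
      rw [hBapp]
      congr 1
      have hPJ : P (J ((ψi i) xh)) = (ψi i) xh :=
        Subtype.ext (Submodule.starProjection_eq_self_iff.mpr ((ψi i) xh).2)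
      rw [hPJ, (ψi i).symm_apply_apply]
    have hTB : T * B = B * T := hcomm T B hT hB
    have hy : (J ((ψi i) xh) : V) ∈ W i := ((ψi i) xh).2
    have hTy : T (J ((ψi i) xh)) = (lam : ℂ) • (J ((ψi i) xh)) := hTx _ hy
    calc ψ (T x) = ψ ((lam : ℂ) • x) := by rw [hTx x hx]
      _ = (starRingEnd ℂ) ((lam : ℂ)) • ψ x := by rw [map_smulₛₗ]
      _ = (lam : ℂ) • ψ x := by rw [Complex.conj_ofReal]
      _ = (lam : ℂ) • (B (J ((ψi i) xh))) := by rw [hψx]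
      _ = B ((lam : ℂ) • (J ((ψi i) xh))) := (B.map_smul _ _).symm
      _ = B (T (J ((ψi i) xh))) := by rw [hTy]
      _ = (B * T) (J ((ψi i) xh)) := rfl
      _ = (T * B) (J ((ψi i) xh)) := by rw [hTB]
      _ = T (B (J ((ψi i) xh))) := rfl
      _ = T (ψ x) := by rw [hψx]
  -- conclude by density
  intro x
  have hC : IsClosed {v : V | ψ (T v) = T (ψ v)} :=
    isClosed_eq (ψ.continuous.comp T.continuous) (T.continuous.comp ψ.continuous)
  have hsub : ∀ v ∈ (⨆ i, W i : Submodule ℂ V), ψ (T v) = T (ψ v) := by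
    intro v hv
    refine Submodule.iSup_induction W (motive := fun v => ψ (T v) = T (ψ v)) hv hmain ?_ ?_
    · simp
    · intro a b ha hb
      rw [map_add, map_add, map_add, map_add, ha, hb]
  have hx : x ∈ closure ((⨆ i, W i : Submodule ℂ V) : Set V) := hWdense x
  exact closure_minimal (fun v hv => hsub v hv) hC hx
end

section
/- Let G be a topological group with subgroups K, B and H. Then the following conditions are equivalent: (1) the set KBH = {kbh : k ∈ K, b ∈ B, h ∈ H} is dense in G; (2) the set HBK = {hbk : h ∈ H, b ∈ B, k ∈ K} is dense in G; (3) the set {(g b₁ k, g b₂ h) : g ∈ G, b₁, b₂ ∈ B, k ∈ K, h ∈ H} is dense in the product topological group G × G. -/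
private lemma homeo_dense_image {X Y : Type*} [TopologicalSpace X] [TopologicalSpace Y]
    (e : X ≃ₜ Y) (s : Set X) : Dense (e '' s) ↔ Dense s := by
  rw [dense_iff_closure_eq, dense_iff_closure_eq, ← Homeomorph.image_closure]
  constructor
  · intro h
    have := congrArg (e.symm '' ·) h
    simpa [Set.image_image, Set.image_univ, e.symm.surjective.range_eq] using this
  · intro h
    rw [h, Set.image_univ, e.surjective.range_eq]

private lemma dense_univ_prod {X Y : Type*} [TopologicalSpace X] [TopologicalSpace Y]
    [Nonempty X] (t : Set Y) : Dense ((Set.univ : Set X) ×ˢ t) ↔ Dense t := by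
  constructor
  · intro h y
    obtain ⟨x⟩ := ‹Nonempty X›
    have := h (x, y)
    rw [closure_prod_eq] at this
    exact this.2
  · intro h
    exact dense_univ.prod h

/-- Let `G` be a topological group with subgroups `K`, `B`, `H`. Then the following are
equivalent: (1) `KBH` is dense in `G`; (2) `HBK` is dense in `G`; (3) the set
`{(g b₁ k, g b₂ h)}` is dense in `G × G`. -/
theorem dense_KBH_iff_dense_HBK_iff_dense_diag
    {G : Type*} [Group G] [TopologicalSpace G] [IsTopologicalGroup G]
    (K B H : Subgroup G) :
    ((Dense {x : G | ∃ k ∈ K, ∃ b ∈ B, ∃ h ∈ H, x = k * b * h} ↔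
      Dense {x : G | ∃ h ∈ H, ∃ b ∈ B, ∃ k ∈ K, x = h * b * k}) ∧
     (Dense {x : G | ∃ k ∈ K, ∃ b ∈ B, ∃ h ∈ H, x = k * b * h} ↔
      Dense {p : G × G | ∃ g : G, ∃ b₁ ∈ B, ∃ b₂ ∈ B, ∃ k ∈ K, ∃ h ∈ H,
        p = (g * b₁ * k, g * b₂ * h)})) := by
  set T : Set G := {x : G | ∃ k ∈ K, ∃ b ∈ B, ∃ h ∈ H, x = k * b * h} with hT
  -- HBK is the image of T under inversion
  have h1 : {x : G | ∃ h ∈ H, ∃ b ∈ B, ∃ k ∈ K, x = h * b * k} =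
      (Homeomorph.inv G) '' T := by
    ext x
    simp only [Set.mem_setOf_eq, Set.mem_image, Homeomorph.coe_inv]
    constructor
    · rintro ⟨h, hh, b, hb, k, hk, rfl⟩
      exact ⟨k⁻¹ * b⁻¹ * h⁻¹, ⟨k⁻¹, K.inv_mem hk, b⁻¹, B.inv_mem hb, h⁻¹, H.inv_mem hh, rfl⟩,
        by group⟩
    · rintro ⟨y, ⟨k, hk, b, hb, h, hh, rfl⟩, rfl⟩
      exact ⟨h⁻¹, H.inv_mem hh, b⁻¹, B.inv_mem hb, k⁻¹, K.inv_mem hk, by group⟩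
  -- the diagonal set is the image of univ ×ˢ T under shearMulRight
  have h2 : {p : G × G | ∃ g : G, ∃ b₁ ∈ B, ∃ b₂ ∈ B, ∃ k ∈ K, ∃ h ∈ H,
      p = (g * b₁ * k, g * b₂ * h)} =
      (Homeomorph.shearMulRight G) '' (Set.univ ×ˢ T) := by
    ext ⟨x, y⟩
    simp only [Set.mem_setOf_eq, Set.mem_image, Set.mem_prod, Set.mem_univ, true_and,
      Homeomorph.shearMulRight_coe, Prod.exists, Prod.mk.injEq]
    constructor
    · rintro ⟨g, b₁, hb₁, b₂, hb₂, k, hk, h, hh, hx, hy⟩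
      refine ⟨x, k⁻¹ * b₁⁻¹ * b₂ * h, ⟨k⁻¹, K.inv_mem hk, b₁⁻¹ * b₂,
        B.mul_mem (B.inv_mem hb₁) hb₂, h, hh, by group⟩, rfl, ?_⟩
      rw [hx, hy]; group
    · rintro ⟨a, t, ⟨k, hk, b, hb, h, hh, rfl⟩, rfl, rfl⟩
      exact ⟨a * k, 1, B.one_mem, b, hb, k⁻¹, K.inv_mem hk, h, hh, by
        constructor <;> group⟩
  refine ⟨?_, ?_⟩
  · rw [h1, homeo_dense_image]
  · rw [h2, homeo_dense_image, dense_univ_prod]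
end
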